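/- arXiv:2002.06051 — 6 statements merged into one kernel-verified Lean document; each statement's English description precedes it below -/
import Mathlib

section
/- For n ≥ 1, the roots of the polynomial χ_n(λ) = ((λ - i)^n + (λ + i)^n)/2 are exactly the real numbers λ_k = cot(π/(2n) + kπ/n) for k = 0, 1, ..., n-1. -/
open Complex Real

lemma chi_key (θ : ℝ) (hs : Real.sin θ ≠ 0) (n : ℕ) :
    ((Real.cot θ : ℂ) - Complex.I) ^ n + ((Real.cot θ : ℂ) + Complex.I) ^ n
      = 2 * Complex.cos (n * θ) / (Real.sin θ : ℂ) ^ n := by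
  have hs' : (Real.sin θ : ℂ) ≠ 0 := by exact_mod_cast hs
  have hsC : Complex.sin (θ : ℂ) ≠ 0 := by rwa [← Complex.ofReal_sin]
  have h1 : (Real.cot θ : ℂ) - Complex.I = Complex.exp ((-θ : ℝ) * Complex.I) / Real.sin θ := by
    rw [Complex.exp_mul_I, Real.cot_eq_cos_div_sin]
    push_cast
    rw [Complex.cos_neg, Complex.sin_neg]
    field_simp
    ring
  have h2 : (Real.cot θ : ℂ) + Complex.I = Complex.exp ((θ : ℝ) * Complex.I) / Real.sin θ := by
    rw [Complex.exp_mul_I, Real.cot_eq_cos_div_sin]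
    push_cast
    field_simp
  rw [h1, h2, div_pow, div_pow, ← Complex.exp_nat_mul, ← Complex.exp_nat_mul,
    Complex.cos, ← add_div,
    show ((n : ℂ) * (((-θ : ℝ) : ℂ) * Complex.I)) = (-((n : ℂ) * (θ : ℂ))) * Complex.I by
      push_cast; ring,
    show ((n : ℂ) * (((θ : ℝ) : ℂ) * Complex.I)) = ((n : ℂ) * (θ : ℂ)) * Complex.I by ring]
  ring

/-- The roots of χ_n(λ) = ((λ-i)^n + (λ+i)^n)/2 are exactly the real numbers
cot(π/(2n) + kπ/n), k = 0, …, n-1. -/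
theorem roots_of_chi (n : ℕ) (hn : 1 ≤ n) (z : ℂ) :
    ((z - Complex.I) ^ n + (z + Complex.I) ^ n) / 2 = 0 ↔
      ∃ k < n, z = (Real.cot (π / (2 * n) + k * π / n) : ℂ) := by
  have hn0 : (n : ℝ) ≠ 0 := by positivity
  have hnpos : (0 : ℝ) < n := by positivity
  have hπ := Real.pi_pos
  constructor
  · intro hz
    rw [div_eq_zero_iff] at hz
    have hz : (z - Complex.I) ^ n + (z + Complex.I) ^ n = 0 := by
      rcases hz with h | h
      · exact h
      · norm_num at h
    -- z is real
    have habs : ‖z - Complex.I‖ = ‖z + Complex.I‖ := by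
      have h : (z - Complex.I) ^ n = -(z + Complex.I) ^ n := by linear_combination hz
      have h2 : ‖z - Complex.I‖ ^ n = ‖z + Complex.I‖ ^ n := by
        rw [← norm_pow, ← norm_pow, h, norm_neg]
      exact (pow_left_inj₀ (norm_nonneg _) (norm_nonneg _) (by omega)).1 h2
    have him : z.im = 0 := by
      have := congrArg (· ^ 2) habs
      simp only [Complex.sq_norm, Complex.normSq_apply, Complex.sub_re, Complex.sub_im,
        Complex.add_re, Complex.add_im, Complex.I_re, Complex.I_im] at this
      nlinarith [this]
    set x := z.re with hx
    have hzx : z = (x : ℂ) := by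
      apply Complex.ext <;> simp [him, hx]
    set θ : ℝ := π / 2 - Real.arctan x with hθ
    clear_value θ
    have hcot : Real.cot θ = x := by
      rw [hθ, Real.cot_eq_cos_div_sin, Real.cos_pi_div_two_sub, Real.sin_pi_div_two_sub,
        ← Real.tan_eq_sin_div_cos, Real.tan_arctan]
    have hsin : Real.sin θ ≠ 0 := by
      rw [hθ, Real.sin_pi_div_two_sub]
      exact (Real.cos_arctan_pos x).ne'
    have hθ1 : 0 < θ := by
      have := Real.arctan_lt_pi_div_two x
      rw [hθ]; linarith
    have hθ2 : θ < π := by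
      have := Real.neg_pi_div_two_lt_arctan x
      rw [hθ]; linarith
    rw [hzx, ← hcot, chi_key θ hsin n] at hz
    have hcos : Real.cos (n * θ) = 0 := by
      rw [div_eq_zero_iff] at hz
      rcases hz with h | h
      · have hc : Complex.cos (n * θ) = 0 := by
          rcases mul_eq_zero.1 h with h' | h'
          · norm_num at h'
          · exact h'
        have hc2 : Complex.cos ((((n : ℝ) * θ) : ℝ) : ℂ) = 0 := by push_cast; exact hc
        rw [← Complex.ofReal_cos] at hc2
        exact_mod_cast hc2
      · exact absurd h (pow_ne_zero n (by exact_mod_cast hsin))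
    obtain ⟨m, hm⟩ := Real.cos_eq_zero_iff.1 hcos
    have hm0 : 0 ≤ m := by
      by_contra hneg
      push_neg at hneg
      have hmle : (m : ℝ) ≤ -1 := by exact_mod_cast (by omega : m ≤ -1)
      have h2 : (2 * (m : ℝ) + 1) * π ≤ (-1) * π :=
        mul_le_mul_of_nonneg_right (by linarith) hπ.le
      linarith [mul_pos hnpos hθ1]
    have hmn : m < n := by
      by_contra hge
      push_neg at hge
      have hnm : (n : ℝ) ≤ (m : ℝ) := by exact_mod_cast hge
      have h1 : (n : ℝ) * θ < n * π := mul_lt_mul_of_pos_left hθ2 hnpos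
      have h2 : (2 * (n : ℝ) + 1) * π ≤ (2 * (m : ℝ) + 1) * π :=
        mul_le_mul_of_nonneg_right (by linarith) hπ.le
      linarith
    refine ⟨m.toNat, by omega, ?_⟩
    have hmt : ((m.toNat : ℕ) : ℝ) = (m : ℝ) := by
      exact_mod_cast congrArg (Int.cast : ℤ → ℝ) (Int.toNat_of_nonneg hm0)
    have hθval : θ = π / (2 * n) + (m.toNat : ℝ) * π / n := by
      rw [hmt]
      have h2 : θ = (2 * (m : ℝ) + 1) * π / 2 / n := by
        field_simp at hm ⊢
        linarith [hm]
      rw [h2]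
      field_simp
      ring
    rw [hzx, ← hcot, hθval]
  · rintro ⟨k, hk, rfl⟩
    have hθ1 : 0 < π / (2 * n) + k * π / n := by positivity
    have hθ2 : π / (2 * n) + k * π / n < π := by
      have hk' : (k : ℝ) ≤ (n : ℝ) - 1 := by
        have : (k : ℝ) + 1 ≤ n := by exact_mod_cast hk
        linarith
      rw [div_add_div _ _ (by positivity) hn0, div_lt_iff₀ (by positivity)]
      have h2 : (k : ℝ) * (2 * n * π) ≤ ((n : ℝ) - 1) * (2 * n * π) :=
        mul_le_mul_of_nonneg_right hk' (by positivity)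
      nlinarith [mul_pos hnpos hπ]
    have hsin : Real.sin (π / (2 * n) + k * π / n) ≠ 0 :=
      (Real.sin_pos_of_pos_of_lt_pi hθ1 hθ2).ne'
    rw [chi_key _ hsin n]
    have hcos : Real.cos (n * (π / (2 * n) + k * π / n)) = 0 := by
      apply Real.cos_eq_zero_iff.2 ⟨k, ?_⟩
      field_simp
      push_cast
      ring
    have hc : Complex.cos ((n : ℂ) * ((π / (2 * n) + k * π / n : ℝ) : ℂ)) = 0 := by
      rw [show ((n : ℂ) * ((π / (2 * n) + k * π / n : ℝ) : ℂ))
            = ((((n : ℝ) * (π / (2 * n) + k * π / n)) : ℝ) : ℂ) by push_cast; ring,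
        ← Complex.ofReal_cos, hcos, Complex.ofReal_zero]
    rw [hc]
    norm_num
end

section
/- Let A_n be the n×n Hermitian matrix with zero diagonal, entries i above the diagonal and -i below the diagonal (i the imaginary unit). Then the eigenvalues of A_n are cot(π/(2n) + kπ/n) for k = 0, ..., n-1, and consequently Tr(A_n^{2m}) = Σ_{k=0}^{n-1} cot^{2m}(π/(2n) + kπ/n) while Tr(A_n^{2m+1}) = 0 for all m ≥ 0. -/
open Complex Real Matrix Polynomial

/-- The matrix with zero diagonal, `i` above and `-i` below the diagonal. -/
def skewMat (n : ℕ) : Matrix (Fin n) (Fin n) ℂ :=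
  fun j k => if j < k then Complex.I else if k < j then -Complex.I else 0


noncomputable def th (n k : ℕ) : ℝ := π / (2 * n) + k * π / n

lemma th_pos {n k : ℕ} (hn : 1 ≤ n) : 0 < th n k := by
  have h0 : (0:ℝ) < n := by exact_mod_cast hn
  have := Real.pi_pos
  have h1 : 0 < π / (2*n) := by positivity
  have h2 : (0:ℝ) ≤ k * π / n := by positivity
  unfold th; linarith

lemma th_lt {n k : ℕ} (hk : k < n) : th n k < π := by
  have h0 : (0:ℝ) < n := by exact_mod_cast (Nat.pos_of_ne_zero (by omega))
  have hpi := Real.pi_pos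
  have hkn : (k:ℝ) ≤ n - 1 := by
    have : (k:ℝ) + 1 ≤ n := by exact_mod_cast hk
    linarith
  have : th n k = (2*k+1) * π / (2*n) := by unfold th; field_simp; ring
  rw [this, div_lt_iff₀ (by positivity)]
  nlinarith [hpi]

lemma sin_th_pos {n k : ℕ} (hn : 1 ≤ n) (hk : k < n) : 0 < Real.sin (th n k) :=
  Real.sin_pos_of_pos_of_lt_pi (th_pos hn) (th_lt hk)

lemma cot_root {n k : ℕ} (hn : 1 ≤ n) (hk : k < n) :
    ((Real.cot (th n k) : ℂ) + Complex.I) ^ n + ((Real.cot (th n k) : ℂ) - Complex.I) ^ n = 0 := by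
  set t := th n k with ht
  have hs : Real.sin t ≠ 0 := (sin_th_pos hn hk).ne'
  have hsC : (Real.sin t : ℂ) ≠ 0 := by exact_mod_cast hs
  have hsC' : Complex.sin (t:ℂ) ≠ 0 := by rw [← Complex.ofReal_sin]; exact_mod_cast hs
  have h1 : (Real.cot t : ℂ) + Complex.I = Complex.exp (t * Complex.I) / (Real.sin t : ℂ) := by
    rw [Real.cot_eq_cos_div_sin, Complex.exp_mul_I, Complex.ofReal_div, Complex.ofReal_cos,
      Complex.ofReal_sin]
    field_simp
  have h2 : (Real.cot t : ℂ) - Complex.I = Complex.exp (-(t:ℂ) * Complex.I) / (Real.sin t : ℂ) := by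
    rw [Real.cot_eq_cos_div_sin, Complex.exp_mul_I, Complex.cos_neg, Complex.sin_neg,
      Complex.ofReal_div, Complex.ofReal_cos, Complex.ofReal_sin]
    rw [eq_div_iff hsC']
    field_simp
    ring
  rw [h1, h2, div_pow, div_pow, ← add_div, ← Complex.exp_nat_mul, ← Complex.exp_nat_mul]
  have hnt : (n:ℝ) * t = π/2 + k * π := by
    have h0 : (n:ℝ) ≠ 0 := by positivity
    rw [ht]; unfold th; field_simp
  have e1 : (n:ℂ) * ((t:ℂ) * Complex.I) = ((n*t : ℝ) : ℂ) * Complex.I := by push_cast; ring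
  have e2 : (n:ℂ) * (-(t:ℂ) * Complex.I) = -((n*t : ℝ) : ℂ) * Complex.I := by push_cast; ring
  rw [e1, e2, ← Complex.two_cos, hnt]
  rw [_root_.div_eq_zero_iff]
  left
  rw [show ((π/2 + k*π : ℝ) : ℂ) = ((π/2 + k*π : ℝ) : ℂ) from rfl, ← Complex.ofReal_cos]
  rw [add_comm (π/2), Real.cos_add_pi_div_two, Real.sin_nat_mul_pi]
  simp

lemma cot_inj {n : ℕ} {k l : ℕ} (hn : 1 ≤ n) (hk : k < n) (hl : l < n)
    (h : Real.cot (th n k) = Real.cot (th n l)) : k = l := by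
  have hsk := sin_th_pos hn hk
  have hsl := sin_th_pos hn hl
  rw [Real.cot_eq_cos_div_sin, Real.cot_eq_cos_div_sin, div_eq_div_iff hsk.ne' hsl.ne'] at h
  have hsin : Real.sin (th n k - th n l) = 0 := by
    rw [Real.sin_sub]; linarith [h]
  rw [Real.sin_eq_zero_iff] at hsin
  obtain ⟨m, hm⟩ := hsin
  have hlt : |th n k - th n l| < π := by
    rw [abs_lt]
    constructor <;> nlinarith [th_pos hn (k := k), th_pos hn (k := l), th_lt hk, th_lt hl]
  have hm0 : m = 0 := by
    by_contra hm0
    have : (1:ℝ) ≤ |(m:ℝ)| := by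
      have := Int.one_le_abs hm0
      exact_mod_cast this
    have : π ≤ |(m:ℝ) * π| := by
      rw [abs_mul, abs_of_pos Real.pi_pos]
      nlinarith [Real.pi_pos]
    rw [hm] at this; linarith [hlt]
  rw [hm0] at hm
  simp at hm
  have : (k:ℝ) * π / n = l * π / n := by
    have := hm.symm
    unfold th at this
    linarith
  have hn0 : (0:ℝ) < n := by exact_mod_cast hn
  field_simp at this
  exact_mod_cast (by linarith : (k:ℝ) = l)


lemma cot_pi_sub' (x : ℝ) : Real.cot (π - x) = -Real.cot x := by
  rw [Real.cot_eq_cos_div_sin, Real.cos_pi_sub, Real.sin_pi_sub, neg_div,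
    ← Real.cot_eq_cos_div_sin]

lemma th_reflect {n j : ℕ} (hn : 1 ≤ n) (hj : j < n) : th n (n - 1 - j) = π - th n j := by
  have hn0 : (n:ℝ) ≠ 0 := by positivity
  have hcast : ((n - 1 - j : ℕ) : ℝ) = (n:ℝ) - 1 - j := by
    have h1 : ((n - 1 - j : ℕ) : ℝ) = ((n - 1 - j : ℕ) : ℝ) := rfl
    push_cast [Nat.cast_sub (by omega : j ≤ n - 1), Nat.cast_sub (by omega : 1 ≤ n)]
    ring
  unfold th
  rw [hcast]
  field_simp
  ring

lemma cot_odd_sum {n : ℕ} (hn : 1 ≤ n) (m : ℕ) :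
    ∑ k ∈ Finset.range n, Real.cot (th n k) ^ (2 * m + 1) = 0 := by
  have hrefl := Finset.sum_range_reflect (fun k => Real.cot (th n k) ^ (2 * m + 1)) n
  have hneg : ∀ k ∈ Finset.range n,
      Real.cot (th n (n - 1 - k)) ^ (2 * m + 1) = -(Real.cot (th n k) ^ (2 * m + 1)) := by
    intro k hk
    rw [th_reflect hn (Finset.mem_range.mp hk), cot_pi_sub',
      Odd.neg_pow ⟨m, by ring⟩]
  rw [Finset.sum_congr rfl hneg, Finset.sum_neg_distrib] at hrefl
  linarith [hrefl]



def Mmat (n : ℕ) (x : ℂ) : Matrix (Fin n) (Fin n) ℂ :=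
  fun j k => (if j = k then x else 0) - skewMat n j k

def Bmat (n : ℕ) (x : ℂ) : Matrix (Fin n) (Fin n) ℂ :=
  fun j k =>
    if (j : ℕ) + 1 = n then (if (k : ℕ) + 1 = n then x else Complex.I)
    else if j = k then x - Complex.I
    else if (k : ℕ) = (j : ℕ) + 1 then -(x + Complex.I) else 0

def Smat (n : ℕ) : Matrix (Fin n) (Fin n) ℂ :=
  fun j k => if (k : ℕ) = (j : ℕ) + 1 then 1 else 0

lemma smat_mul (n : ℕ) (M : Matrix (Fin n) (Fin n) ℂ) (j k : Fin n) :
    (Smat n * M) j k = if h : (j : ℕ) + 1 < n then M ⟨(j : ℕ) + 1, h⟩ k else 0 := by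
  rw [Matrix.mul_apply]
  simp only [Smat, ite_mul, one_mul, zero_mul]
  split
  case isTrue h =>
    rw [Finset.sum_eq_single (⟨(j : ℕ) + 1, h⟩ : Fin n)]
    · simp
    · intro b _ hb
      rw [if_neg]
      intro hb'
      exact hb (Fin.ext hb')
    · intro h'; exact absurd (Finset.mem_univ _) h'
  case isFalse h =>
    apply Finset.sum_eq_zero
    intro b _
    rw [if_neg]
    intro hb'
    exact h (hb' ▸ b.isLt)

lemma bmat_eq (n : ℕ) (x : ℂ) : Bmat n x = (1 - Smat n) * Mmat n x := by
  ext j k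
  rw [Matrix.sub_mul, Matrix.one_mul, Matrix.sub_apply, smat_mul]
  have hjlt := j.isLt
  have hklt := k.isLt
  split
  · simp only [Bmat, Mmat, skewMat, Fin.lt_def, Fin.ext_iff, Fin.val_mk]
    split_ifs <;> (first | ring1 | omega)
  · simp only [Bmat, Mmat, skewMat, Fin.lt_def, Fin.ext_iff]
    split_ifs <;> (first | ring1 | omega)

lemma det_one_sub_smat (n : ℕ) : (1 - Smat n).det = 1 := by
  have htri : (1 - Smat n).BlockTriangular id := by
    intro i j hij
    simp only [Matrix.sub_apply, Smat, Matrix.one_apply]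
    rw [if_neg (by exact fun h => absurd h (Fin.ne_of_gt hij)), if_neg (by simp at hij ⊢; omega)]
    ring
  rw [Matrix.det_of_upperTriangular htri]
  apply Finset.prod_eq_one
  intro i _
  simp [Smat, Matrix.one_apply]

lemma bmat_sub1 (n : ℕ) (x : ℂ) :
    (Bmat (n + 2) x).submatrix Fin.succ Fin.succ = Bmat (n + 1) x := by
  ext j k
  simp only [Matrix.submatrix_apply, Bmat, Fin.val_succ, Fin.ext_iff]
  split_ifs <;> (first | rfl | omega)

lemma bmat_sub2 (n : ℕ) (x : ℂ) :
    ((Bmat (n + 2) x).submatrix Fin.castSucc Fin.succ).det = (-(x + Complex.I)) ^ (n + 1) := by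
  have htri : ((Bmat (n + 2) x).submatrix Fin.castSucc Fin.succ).BlockTriangular OrderDual.toDual := by
    intro i j hij
    have hij' : (i : ℕ) < (j : ℕ) := hij
    simp only [Matrix.submatrix_apply, Bmat, Fin.val_succ, Fin.coe_castSucc, Fin.ext_iff,
      Fin.val_succ, Fin.coe_castSucc]
    have hi := i.isLt
    rw [if_neg (by omega), if_neg (by omega), if_neg (by omega)]
  rw [Matrix.det_of_lowerTriangular _ htri]
  have hdiag : ∀ i : Fin (n + 1),
      ((Bmat (n + 2) x).submatrix Fin.castSucc Fin.succ) i i = -(x + Complex.I) := by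
    intro i
    have hi := i.isLt
    simp only [Matrix.submatrix_apply, Bmat, Fin.val_succ, Fin.coe_castSucc, Fin.ext_iff]
    rw [if_neg (by omega), if_neg (by omega)]
    simp
  calc ∏ i : Fin (n+1), ((Bmat (n + 2) x).submatrix Fin.castSucc Fin.succ) i i
      = ∏ _i : Fin (n+1), (-(x + Complex.I)) := Finset.prod_congr rfl fun i _ => hdiag i
    _ = (-(x + Complex.I)) ^ (n + 1) := by
        rw [Finset.prod_const, Finset.card_univ, Fintype.card_fin]

lemma detB (n : ℕ) (x : ℂ) :
    (Bmat (n + 1) x).det = 2⁻¹ * ((x + Complex.I) ^ (n + 1) + (x - Complex.I) ^ (n + 1)) := by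
  induction n generalizing x with
  | zero =>
    rw [Matrix.det_fin_one]
    have : Bmat 1 x 0 0 = x := by
      simp [Bmat]
    rw [this]; ring
  | succ n ih =>
    have h0 : Bmat (n + 2) x 0 0 = x - Complex.I := by
      simp only [Bmat, Fin.val_zero]
      rw [if_neg (by omega)]
      simp
    have hlast : Bmat (n + 2) x (Fin.last (n + 1)) 0 = Complex.I := by
      simp only [Bmat, Fin.val_last, Fin.val_zero]
      rw [if_pos trivial]; exact if_neg (by omega)
    have hmid : ∀ i : Fin (n + 1), i ≠ Fin.last n → Bmat (n + 2) x i.succ 0 = 0 := by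
      intro i hi
      have hi' : (i : ℕ) < n := by
        rcases Fin.lt_or_eq_of_le (Fin.le_last i) with h | h
        · exact h
        · exact absurd h hi
      simp only [Bmat, Fin.val_succ, Fin.val_zero]
      rw [if_neg (by omega), if_neg (Fin.succ_ne_zero _)]; exact if_neg (by omega)
    rw [Matrix.det_succ_column_zero, Fin.sum_univ_succ]
    have hsum : (∑ i : Fin (n + 1), (-1 : ℂ) ^ ((i.succ : Fin (n + 2)) : ℕ) *
        Bmat (n + 2) x i.succ 0 * ((Bmat (n + 2) x).submatrix i.succ.succAbove Fin.succ).det)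
        = (-1) ^ (n + 1) * Complex.I * (-(x + Complex.I)) ^ (n + 1) := by
      rw [Finset.sum_eq_single (Fin.last n)]
      · rw [Fin.succ_last, hlast, Fin.succAbove_last, bmat_sub2]
        simp [Fin.val_last]
      · intro b _ hb
        rw [hmid b hb]
        ring
      · intro h; exact absurd (Finset.mem_univ _) h
    rw [hsum, h0, Fin.succAbove_zero, bmat_sub1, ih]
    have key : (-1 : ℂ) ^ (n + 1) * (-(x + Complex.I)) ^ (n + 1) = (x + Complex.I) ^ (n + 1) := by
      rw [← mul_pow]
      congr 1
      ring
    simp only [Fin.val_zero, pow_zero, one_mul]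
    linear_combination Complex.I * key

lemma detM (n : ℕ) (hn : 1 ≤ n) (x : ℂ) :
    (Mmat n x).det = 2⁻¹ * ((x + Complex.I) ^ n + (x - Complex.I) ^ n) := by
  obtain ⟨m, rfl⟩ : ∃ m, n = m + 1 := ⟨n - 1, by omega⟩
  have h := congrArg Matrix.det (bmat_eq (m + 1) x)
  rw [Matrix.det_mul, det_one_sub_smat, one_mul] at h
  rw [← h, detB]

noncomputable def fpoly (n : ℕ) : Polynomial ℂ :=
  Polynomial.C (2⁻¹ : ℂ) * ((X + C Complex.I) ^ n + (X - C Complex.I) ^ n)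

lemma charpoly_skew (n : ℕ) (hn : 1 ≤ n) : (skewMat n).charpoly = fpoly n := by
  apply Polynomial.funext
  intro x
  have h1 : eval x (skewMat n).charpoly = (Mmat n x).det := by
    rw [Matrix.charpoly, show (eval x : Polynomial ℂ → ℂ) = (evalRingHom x : Polynomial ℂ →+* ℂ) from rfl,
      RingHom.map_det]
    congr 1
    ext j k
    simp only [Matrix.map_apply, charmatrix_apply, Mmat, Matrix.diagonal_apply, coe_evalRingHom,
      eval_sub, eval_C]
    by_cases h : j = k <;> simp [h]
  rw [h1, detM n hn x]
  simp [fpoly]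

lemma fpoly_coeff_n (n : ℕ) : (fpoly n).coeff n = 1 := by
  unfold fpoly
  rw [coeff_C_mul, coeff_add]
  have h1 : ((X + C Complex.I) ^ n).coeff n = 1 := by
    rw [coeff_X_add_C_pow]; simp
  have h2 : ((X - C Complex.I) ^ n).coeff n = 1 := by
    rw [sub_eq_add_neg, ← C_neg, coeff_X_add_C_pow]; simp
  rw [h1, h2]; norm_num

lemma fpoly_natDegree_le (n : ℕ) : (fpoly n).natDegree ≤ n := by
  unfold fpoly
  refine le_trans (natDegree_C_mul_le _ _) ?_
  refine le_trans (natDegree_add_le _ _) ?_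
  simp only [max_le_iff]
  constructor
  · exact le_trans (natDegree_pow_le) (by simp [natDegree_X_add_C])
  · refine le_trans (natDegree_pow_le) ?_
    have : (X - C Complex.I).natDegree = 1 := natDegree_X_sub_C _
    simp [this]

lemma fpoly_monic (n : ℕ) : (fpoly n).Monic := by
  have hle := fpoly_natDegree_le n
  have hco := fpoly_coeff_n n
  have hdeg : (fpoly n).natDegree = n :=
    le_antisymm hle (le_natDegree_of_ne_zero (by rw [hco]; exact one_ne_zero))
  unfold Monic leadingCoeff
  rw [hdeg, hco]

lemma prod_eq (n : ℕ) (hn : 1 ≤ n) :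
    ∏ k ∈ Finset.range n, (X - C (Real.cot (th n k) : ℂ)) = fpoly n := by
  set c : ℕ → ℂ := fun k => (Real.cot (th n k) : ℂ) with hc
  have hinj : Set.InjOn c (Finset.range n) := by
    intro a ha b hb hab
    simp only [Finset.coe_range, Set.mem_Iio] at ha hb
    exact cot_inj hn ha hb (Complex.ofReal_injective hab)
  have hroot : ∀ k ∈ Finset.range n, (fpoly n).IsRoot (c k) := by
    intro k hk
    simp only [Finset.mem_range] at hk
    unfold fpoly
    simp only [IsRoot, eval_mul, eval_C, eval_add, eval_pow, eval_sub, eval_X]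
    rw [cot_root hn hk]
    simp
  have hmonic := fpoly_monic n
  have hne : fpoly n ≠ 0 := hmonic.ne_zero
  -- the image finset
  set s : Finset ℂ := (Finset.range n).image c with hs
  have hcard : s.card = n := by
    rw [hs, Finset.card_image_of_injOn hinj, Finset.card_range]
  have hsub : s.val ≤ (fpoly n).roots := by
    refine Multiset.le_iff_count.mpr fun a => ?_
    by_cases ha : a ∈ s
    · have h1 : s.val.count a = 1 :=
        Multiset.count_eq_one_of_mem s.nodup ha
      rw [h1, count_roots]
      obtain ⟨k, hk, rfl⟩ := Finset.mem_image.mp ha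
      exact (Polynomial.le_rootMultiplicity_iff hne).mpr
        (by rw [pow_one]; exact dvd_iff_isRoot.mpr (hroot k hk))
    · rw [Multiset.count_eq_zero_of_notMem (by simpa using ha)]; exact Nat.zero_le _
  have hdvd : (∏ k ∈ Finset.range n, (X - C (c k))) ∣ fpoly n := by
    have h1 : ∏ k ∈ Finset.range n, (X - C (c k)) = (s.val.map fun a => X - C a).prod := by
      have h2 : (s.val.map fun a => X - C a).prod = ∏ a ∈ s, (X - C a) := rfl
      rw [h2, hs, Finset.prod_image
        (fun a ha b hb h => hinj (Finset.mem_coe.mpr ha) (Finset.mem_coe.mpr hb) h)]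
    rw [h1]
    exact dvd_trans (Multiset.prod_dvd_prod_of_le (Multiset.map_le_map hsub))
      (prod_multiset_X_sub_C_dvd _)
  obtain ⟨q, hq⟩ := hdvd
  have hPmonic : (∏ k ∈ Finset.range n, (X - C (c k))).Monic :=
    monic_prod_of_monic _ _ fun k _ => monic_X_sub_C _
  have hPdeg : (∏ k ∈ Finset.range n, (X - C (c k))).natDegree = n := by
    rw [natDegree_prod _ _ fun k _ => X_sub_C_ne_zero _]
    simp [natDegree_X_sub_C]
  have hqmonic : q.Monic := by
    have := hmonic
    rw [hq] at this
    exact hPmonic.of_mul_monic_left this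
  have hfdeg : (fpoly n).natDegree = n :=
    le_antisymm (fpoly_natDegree_le n)
      (le_natDegree_of_ne_zero (by rw [fpoly_coeff_n]; exact one_ne_zero))
  have hqdeg : q.natDegree = 0 := by
    have := hfdeg
    rw [hq, hPmonic.natDegree_mul hqmonic, hPdeg] at this
    omega
  have hq1 : q = 1 := hqmonic.natDegree_eq_zero.mp hqdeg
  rw [hq, hq1, mul_one]



lemma skew_herm (n : ℕ) : (skewMat n).IsHermitian := by
  ext j k
  simp only [Matrix.conjTranspose_apply, skewMat, Fin.lt_def]
  split_ifs <;> (first | omega | simp)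

section spectral
variable {n : ℕ}

lemma trace_pow_eq (m : ℕ) :
    Matrix.trace (skewMat n ^ m) = ∑ i : Fin n, ((skew_herm n).eigenvalues i : ℂ) ^ m := by
  set A := skewMat n with hA
  set hH := skew_herm n
  set U : Matrix (Fin n) (Fin n) ℂ := (hH.eigenvectorUnitary : Matrix (Fin n) (Fin n) ℂ) with hU
  set D : Matrix (Fin n) (Fin n) ℂ := Matrix.diagonal (RCLike.ofReal ∘ hH.eigenvalues) with hD
  have hspec : A = U * D * star U := hH.spectral_theorem
  have hUU' : U * star U = 1 := Matrix.mem_unitaryGroup_iff.mp hH.eigenvectorUnitary.2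
  have hUU : star U * U = 1 := Matrix.mem_unitaryGroup_iff'.mp hH.eigenvectorUnitary.2
  have hpow : ∀ m : ℕ, A ^ m = U * D ^ m * star U := by
    intro m
    induction m with
    | zero => rw [pow_zero, pow_zero, mul_one, hUU']
    | succ m ih =>
      rw [pow_succ, ih]
      conv_lhs => rw [hspec]
      calc (U * D ^ m * star U) * (U * D * star U)
          = U * D ^ m * (star U * U) * (D * star U) := by simp only [mul_assoc]
        _ = U * D ^ m * (D * star U) := by rw [hUU, mul_one]
        _ = U * D ^ (m + 1) * star U := by rw [pow_succ]; simp only [mul_assoc]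
  rw [hpow m, mul_assoc, Matrix.trace_mul_comm, mul_assoc, hUU, mul_one, hD,
    Matrix.diagonal_pow, Matrix.trace_diagonal]
  rfl

lemma charpoly_eq_prod_eig :
    (skewMat n).charpoly = ∏ i : Fin n, (X - C (((skew_herm n).eigenvalues i : ℝ) : ℂ)) := by
  set A := skewMat n with hA
  set hH := skew_herm n
  set U : Matrix (Fin n) (Fin n) ℂ := (hH.eigenvectorUnitary : Matrix (Fin n) (Fin n) ℂ) with hU
  set D : Matrix (Fin n) (Fin n) ℂ := Matrix.diagonal (RCLike.ofReal ∘ hH.eigenvalues) with hD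
  have hspec : A = U * D * star U := hH.spectral_theorem
  have hUU' : U * star U = 1 := Matrix.mem_unitaryGroup_iff.mp hH.eigenvectorUnitary.2
  have hcm : charmatrix A = (U.map C) * charmatrix D * ((star U).map C) := by
    rw [hspec]
    unfold charmatrix
    rw [Matrix.mul_sub, Matrix.sub_mul]
    congr 1
    · -- scalar X terms
      have h1 : (U.map C) * (Matrix.scalar (Fin n)) (X : Polynomial ℂ) = (Matrix.scalar (Fin n)) (X : Polynomial ℂ) * (U.map C) :=
        (Matrix.scalar_commute _ (fun r => Commute.all _ _) _).symm
      rw [h1, mul_assoc, ← Matrix.map_mul, hUU', Matrix.map_one _ (map_zero C) (map_one C), mul_one]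
    · -- map C terms
      simp only [RingHom.mapMatrix_apply]
      rw [← Matrix.map_mul, ← Matrix.map_mul]
  have hdet : A.charpoly = D.charpoly := by
    unfold Matrix.charpoly
    rw [hcm, Matrix.det_mul, Matrix.det_mul, mul_comm, ← mul_assoc, ← Matrix.det_mul,
      ← Matrix.map_mul]
    have h2 : star U * U = 1 := Matrix.mem_unitaryGroup_iff'.mp hH.eigenvectorUnitary.2
    rw [h2, Matrix.map_one _ (map_zero C) (map_one C), Matrix.det_one, one_mul]
  rw [hdet, Matrix.charpoly_of_upperTriangular D (Matrix.blockTriangular_diagonal _)]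
  refine Finset.prod_congr rfl fun i _ => ?_
  rw [hD, Matrix.diagonal_apply_eq]
  rfl
end spectral


/-- The eigenvalues of `skewMat n` are cot(π/(2n)+kπ/n), k = 0,…,n-1, hence the
traces of its even powers are the corresponding cotangent power sums and the traces
of its odd powers vanish. -/
theorem skewMat_eigenvalues_and_traces (n : ℕ) (hn : 1 ≤ n) :
    (skewMat n).charpoly =
        ∏ k ∈ Finset.range n, (X - C (Real.cot (π / (2 * n) + k * π / n) : ℂ)) ∧
    (∀ m : ℕ, Matrix.trace (skewMat n ^ (2 * m)) =
        ((∑ k ∈ Finset.range n, Real.cot (π / (2 * n) + k * π / n) ^ (2 * m) : ℝ) : ℂ)) ∧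
    (∀ m : ℕ, Matrix.trace (skewMat n ^ (2 * m + 1)) = 0) := by
  have hth : ∀ k : ℕ, π / (2 * n) + k * π / n = th n k := fun _ => rfl
  have hpart1 : (skewMat n).charpoly =
      ∏ k ∈ Finset.range n, (X - C ((Real.cot (th n k) : ℝ) : ℂ)) := by
    rw [charpoly_skew n hn, ← prod_eq n hn]
  -- multiset of eigenvalues equals multiset of cotangents
  have heqprod : (∏ i : Fin n, (X - C (((skew_herm n).eigenvalues i : ℝ) : ℂ)))
      = ∏ k ∈ Finset.range n, (X - C ((Real.cot (th n k) : ℝ) : ℂ)) := by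
    rw [← charpoly_eq_prod_eig, hpart1]
  have hms : (Finset.univ.val.map fun i : Fin n => (((skew_herm n).eigenvalues i : ℝ) : ℂ))
      = ((Finset.range n).val.map fun k => ((Real.cot (th n k) : ℝ) : ℂ)) := by
    have h1 := congrArg Polynomial.roots heqprod
    rwa [show (∏ i : Fin n, (X - C (((skew_herm n).eigenvalues i : ℝ) : ℂ)))
        = ((Finset.univ.val.map fun i : Fin n => (((skew_herm n).eigenvalues i : ℝ) : ℂ)).map
            fun a => X - C a).prod from by rw [Multiset.map_map]; rfl,
      show (∏ k ∈ Finset.range n, (X - C ((Real.cot (th n k) : ℝ) : ℂ)))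
        = (((Finset.range n).val.map fun k => ((Real.cot (th n k) : ℝ) : ℂ)).map
            fun a => X - C a).prod from by rw [Multiset.map_map]; rfl,
      Polynomial.roots_multiset_prod_X_sub_C, Polynomial.roots_multiset_prod_X_sub_C] at h1
  have hsum : ∀ m : ℕ, (∑ i : Fin n, (((skew_herm n).eigenvalues i : ℝ) : ℂ) ^ m)
      = ∑ k ∈ Finset.range n, ((Real.cot (th n k) : ℝ) : ℂ) ^ m := by
    intro m
    have h2 := congrArg (fun s : Multiset ℂ => (s.map fun z => z ^ m).sum) hms
    simp only [Multiset.map_map, Function.comp] at h2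
    exact h2
  refine ⟨hpart1, fun m => ?_, fun m => ?_⟩
  · rw [trace_pow_eq, hsum]
    norm_cast
    refine Finset.sum_congr rfl fun k _ => ?_
    congr 2
    unfold th
    push_cast
    ring
  · rw [trace_pow_eq, hsum]
    have h0 := cot_odd_sum hn m
    exact_mod_cast h0
end

section
/- Let π be a noncrossing partition of {1,...,2n} and B an inner odd block of π. Then the padding interval I(B) = [min B, max B] has odd cardinality, min B and max B have the same parity, and exactly one of the two outer intervals [1, min B - 1] and [max B + 1, 2n] has odd cardinality. -/
open Finset

/-- Two distinct blocks cross if they interlace as `i < j < k < l` with `i,k` in one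
block and `j,l` in the other. -/
def IsNoncrossing {s : Finset ℕ} (P : Finpartition s) : Prop :=
  ∀ B ∈ P.parts, ∀ B' ∈ P.parts, B ≠ B' →
    ¬ ∃ i j k l : ℕ, i ∈ B ∧ k ∈ B ∧ j ∈ B' ∧ l ∈ B' ∧ i < j ∧ j < k ∧ k < l

/-- `B'` is nested inside `B`: `min B < min B' ≤ max B' < max B`. -/
def Nested (B' B : Finset ℕ) : Prop :=
  (∀ x ∈ B', ∃ a ∈ B, a < x) ∧ (∀ x ∈ B', ∃ b ∈ B, x < b)

/-- An inner odd block: an odd block with no other odd block nested inside it. -/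
def InnerOdd {s : Finset ℕ} (P : Finpartition s) (B : Finset ℕ) : Prop :=
  B ∈ P.parts ∧ Odd B.card ∧
    ∀ B' ∈ P.parts, B' ≠ B → Odd B'.card → ¬ Nested B' B

/-- For an inner odd block `B` of a noncrossing partition of `{1,…,2n}`, the padding
interval `[min B, max B]` is odd, `min B` and `max B` have the same parity, and exactly
one of the outer intervals `[1, min B - 1]` and `[max B + 1, 2n]` is odd. -/
theorem innerOdd_padding_interval (n : ℕ) (P : Finpartition (Finset.Icc 1 (2 * n)))
    (hP : IsNoncrossing P) (B : Finset ℕ) (hB : InnerOdd P B) (hne : B.Nonempty) :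
    Odd (Finset.Icc (B.min' hne) (B.max' hne)).card ∧
    B.min' hne % 2 = B.max' hne % 2 ∧
    Xor' (Odd (Finset.Icc 1 (B.min' hne - 1)).card)
         (Odd (Finset.Icc (B.max' hne + 1) (2 * n)).card) := by
  obtain ⟨hBparts, hBodd, hInner⟩ := hB
  set m := B.min' hne with hm
  set M := B.max' hne with hMdef
  have hmB : m ∈ B := B.min'_mem hne
  have hMB : M ∈ B := B.max'_mem hne
  have hBsub : B ⊆ Finset.Icc 1 (2 * n) := P.le hBparts
  have h1m : 1 ≤ m := (Finset.mem_Icc.1 (hBsub hmB)).1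
  have hM2n : M ≤ 2 * n := (Finset.mem_Icc.1 (hBsub hMB)).2
  have hmM : m ≤ M := Finset.min'_le B M hMB
  set S := Finset.Icc m M with hS
  have hBS : B ⊆ S := by
    intro x hx
    exact Finset.mem_Icc.2 ⟨Finset.min'_le B x hx, Finset.le_max' B x hx⟩
  -- every other part meeting S lies strictly inside (m, M)
  have key : ∀ C ∈ P.parts, C ≠ B → (C ∩ S).Nonempty → C ⊆ Finset.Ioo m M := by
    intro C hC hCB ⟨p, hp⟩
    have hpC : p ∈ C := (Finset.mem_inter.1 hp).1
    have hpS : p ∈ S := (Finset.mem_inter.1 hp).2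
    have hdisj : Disjoint C B := P.disjoint hC hBparts hCB
    have hpo : m < p ∧ p < M := by
      have hpB : p ∉ B := fun h => (Finset.disjoint_left.1 hdisj hpC) h
      have := Finset.mem_Icc.1 hpS
      rcases this with ⟨h1, h2⟩
      constructor
      · rcases lt_or_eq_of_le h1 with h | h
        · exact h
        · exact absurd (h ▸ hmB) hpB
      · rcases lt_or_eq_of_le h2 with h | h
        · exact h
        · exact absurd (h ▸ hMB) hpB
    intro q hqC
    have hqB : q ∉ B := fun h => (Finset.disjoint_left.1 hdisj hqC) h
    rw [Finset.mem_Ioo]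
    by_contra hcon
    push_neg at hcon
    rcases lt_or_ge q m with hq | hq
    · -- q < m < p < M : C crosses B
      exact hP C hC B hBparts hCB ⟨q, m, p, M, hqC, hpC, hmB, hMB, hq, hpo.1, hpo.2⟩
    · have hmq : m < q := lt_of_le_of_ne hq (fun h2 => hqB (h2 ▸ hmB))
      have hMq : M < q := by
        rcases lt_or_ge M q with h | h
        · exact h
        · have h1 := hcon hmq
          have h2 : q < M := lt_of_le_of_ne h (fun h2 => hqB (h2 ▸ hMB))
          omega
      -- m < p < M < q : B crosses C
      exact hP B hBparts C hC (Ne.symm hCB) ⟨m, p, M, q, hmB, hMB, hpC, hqC, hpo.1, hpo.2, hMq⟩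
  -- the parts meeting S
  set T := P.parts.filter (fun C => (C ∩ S).Nonempty) with hT
  have hBT : B ∈ T := Finset.mem_filter.2 ⟨hBparts, ⟨m, Finset.mem_inter.2 ⟨hmB, Finset.mem_Icc.2 ⟨le_refl m, hmM⟩⟩⟩⟩
  have hcover : S = T.biUnion id := by
    ext x
    constructor
    · intro hx
      have hx2n : x ∈ Finset.Icc 1 (2 * n) := by
        have := Finset.mem_Icc.1 hx
        exact Finset.mem_Icc.2 ⟨le_trans h1m this.1, le_trans this.2 hM2n⟩
      obtain ⟨C, hC, hxC⟩ := P.exists_mem hx2n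
      refine Finset.mem_biUnion.2 ⟨C, Finset.mem_filter.2 ⟨hC, ⟨x, Finset.mem_inter.2 ⟨hxC, hx⟩⟩⟩, hxC⟩
    · intro hx
      obtain ⟨C, hC, hxC⟩ := Finset.mem_biUnion.1 hx
      obtain ⟨hCparts, hCne⟩ := Finset.mem_filter.1 hC
      by_cases hCB : C = B
      · exact hBS (hCB ▸ hxC)
      · have := key C hCparts hCB hCne hxC
        exact Finset.mem_Icc.2 ⟨le_of_lt (Finset.mem_Ioo.1 this).1, le_of_lt (Finset.mem_Ioo.1 this).2⟩
  have hcard : S.card = ∑ C ∈ T, C.card := by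
    rw [hcover]
    exact Finset.card_biUnion (fun C hC D hD hCD =>
      P.disjoint (Finset.mem_filter.1 hC).1 (Finset.mem_filter.1 hD).1 hCD)
  have hSodd : Odd S.card := by
    rw [hcard, ← Finset.sum_erase_add _ _ hBT]
    refine Even.add_odd ?_ hBodd
    refine Finset.even_sum _ (fun C hC => ?_)
    obtain ⟨hCB, hCT⟩ := Finset.mem_erase.1 hC
    obtain ⟨hCparts, hCne⟩ := Finset.mem_filter.1 hCT
    have hsub := key C hCparts hCB hCne
    have hnested : Nested C B := by
      constructor
      · exact fun x hx => ⟨m, hmB, (Finset.mem_Ioo.1 (hsub hx)).1⟩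
      · exact fun x hx => ⟨M, hMB, (Finset.mem_Ioo.1 (hsub hx)).2⟩
    rcases Nat.even_or_odd C.card with h | h
    · exact h
    · exact absurd hnested (hInner C hCparts hCB h)
  have hScard : S.card = M + 1 - m := Nat.card_Icc m M
  refine ⟨hSodd, ?_, ?_⟩
  · have := hSodd
    rw [hScard, Nat.odd_iff] at this
    omega
  · have := hSodd
    rw [hScard, Nat.odd_iff] at this
    simp only [Xor', Nat.odd_iff, Nat.card_Icc]
    unfold Xor
    omega
end

section
/- Let π be a noncrossing partition of {1,...,2n} such that π ∨ 1̂₂ⁿ = 1̂_{2n}, where 1̂₂ⁿ is the pair partition {(1,2),(3,4),...,(2n-1,2n)} and the join is taken in the lattice of noncrossing partitions. If π has two inner odd blocks that are both intersected by a common pair (2k-1, 2k) of 1̂₂ⁿ, then every other block of π has even cardinality. -/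
open Finset

/-- The join of `P` with the standard pair partition `{(1,2),(3,4),…,(2n-1,2n)}`
is the one-block partition, i.e. the equivalence relation generated by the blocks of
`P` together with the standard braces relates any two elements of `{1,…,2n}`. -/
def JoinWithBracesIsTop (n : ℕ) (P : Finpartition (Finset.Icc 1 (2 * n))) : Prop :=
  ∀ a ∈ Finset.Icc 1 (2 * n), ∀ b ∈ Finset.Icc 1 (2 * n),
    Relation.EqvGen
      (fun x y => (∃ B ∈ P.parts, x ∈ B ∧ y ∈ B) ∨
        (∃ k : ℕ, 1 ≤ k ∧ k ≤ n ∧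
          ((x = 2 * k - 1 ∧ y = 2 * k) ∨ (x = 2 * k ∧ y = 2 * k - 1)))) a b

/-- Main auxiliary lemma: the oriented version where `2k-1 ∈ B₁` and `2k ∈ B₂`. -/
lemma aux_even_blocks (n : ℕ)
    (P : Finpartition (Finset.Icc 1 (2 * n))) (hP : IsNoncrossing P)
    (hjoin : JoinWithBracesIsTop n P)
    (B₁ B₂ : Finset ℕ) (h₁ : InnerOdd P B₁) (h₂ : InnerOdd P B₂) (hne : B₁ ≠ B₂)
    (k : ℕ) (hk1 : 1 ≤ k) (hkn : k ≤ n) (hmem1 : 2 * k - 1 ∈ B₁) (hmem2 : 2 * k ∈ B₂)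
    (B : Finset ℕ) (hB : B ∈ P.parts) (hB₁ : B ≠ B₁) (hB₂ : B ≠ B₂) :
    Even B.card := by
  obtain ⟨hB₁p, hodd₁, hinner₁⟩ := h₁
  obtain ⟨hB₂p, hodd₂, hinner₂⟩ := h₂
  have hdisj : ∀ {C C' : Finset ℕ}, C ∈ P.parts → C' ∈ P.parts → C ≠ C' →
      ∀ {x : ℕ}, x ∈ C → x ∉ C' := by
    intro C C' hC hC' hne x hx hx'
    exact hne (P.eq_of_mem_parts hC hC' hx hx')
  have hk2 : 2 * k - 1 < 2 * k := by omega
  -- Claim B : every element of B₁ is ≤ 2k-1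
  have hB₁le : ∀ x ∈ B₁, x ≤ 2 * k - 1 := by
    intro x hx
    by_contra h
    push_neg at h
    have hxne : x ≠ 2 * k := fun e => hdisj hB₁p hB₂p hne hx (e ▸ hmem2)
    have hxgt : 2 * k < x := by omega
    refine hinner₁ B₂ hB₂p hne.symm hodd₂ ⟨?_, ?_⟩
    · intro z hz
      refine ⟨2 * k - 1, hmem1, ?_⟩
      by_contra hzl
      push_neg at hzl
      have hzne : z ≠ 2 * k - 1 := fun e => hdisj hB₂p hB₁p hne.symm hz (e ▸ hmem1)
      have : z < 2 * k - 1 := lt_of_le_of_ne hzl hzne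
      exact hP B₂ hB₂p B₁ hB₁p hne.symm
        ⟨z, 2 * k - 1, 2 * k, x, hz, hmem2, hmem1, hx, this, hk2, hxgt⟩
    · intro z hz
      refine ⟨x, hx, ?_⟩
      by_contra hzl
      push_neg at hzl
      have hzne : x ≠ z := fun e => hdisj hB₁p hB₂p hne hx (e ▸ hz)
      have : x < z := lt_of_le_of_ne hzl hzne
      exact hP B₁ hB₁p B₂ hB₂p hne
        ⟨2 * k - 1, 2 * k, x, z, hmem1, hx, hmem2, hz, hk2, hxgt, this⟩
  -- Claim A : every element of B₂ is ≥ 2k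
  have hB₂ge : ∀ y ∈ B₂, 2 * k ≤ y := by
    intro y hy
    by_contra h
    push_neg at h
    have hyne : y ≠ 2 * k - 1 := fun e => hdisj hB₂p hB₁p hne.symm hy (e ▸ hmem1)
    have hylt : y < 2 * k - 1 := by omega
    refine hinner₂ B₁ hB₁p hne hodd₁ ⟨?_, ?_⟩
    · intro x hx
      refine ⟨y, hy, ?_⟩
      by_contra hxl
      push_neg at hxl
      have hxne : x ≠ y := fun e => hdisj hB₁p hB₂p hne hx (e ▸ hy)
      have : x < y := lt_of_le_of_ne hxl hxne
      exact hP B₁ hB₁p B₂ hB₂p hne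
        ⟨x, y, 2 * k - 1, 2 * k, hx, hmem1, hy, hmem2, this, hylt, hk2⟩
    · intro x hx
      refine ⟨2 * k, hmem2, ?_⟩
      by_contra hxl
      push_neg at hxl
      have hxne : x ≠ 2 * k := fun e => hdisj hB₁p hB₂p hne hx (e ▸ hmem2)
      have : 2 * k < x := lt_of_le_of_ne hxl (Ne.symm hxne)
      exact hP B₂ hB₂p B₁ hB₁p hne.symm
        ⟨y, 2 * k - 1, 2 * k, x, hy, hmem2, hmem1, hx, hylt, hk2, this⟩
  set m₁ := B₁.min' (P.nonempty_of_mem_parts hB₁p) with hm₁def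
  set M₂ := B₂.max' (P.nonempty_of_mem_parts hB₂p) with hM₂def
  have hm₁ : m₁ ∈ B₁ := B₁.min'_mem _
  have hM₂ : M₂ ∈ B₂ := B₂.max'_mem _
  have hm₁le : ∀ x ∈ B₁, m₁ ≤ x := fun x hx => B₁.min'_le x hx
  have hM₂ge : ∀ y ∈ B₂, y ≤ M₂ := fun y hy => B₂.le_max' y hy
  have hm₁k : m₁ ≤ 2 * k - 1 := hB₁le m₁ hm₁
  have hM₂k : 2 * k ≤ M₂ := hB₂ge M₂ hM₂
  have hs₁ : B₁ ⊆ Finset.Icc 1 (2 * n) := P.le hB₁p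
  have hs₂ : B₂ ⊆ Finset.Icc 1 (2 * n) := P.le hB₂p
  have hm₁s : m₁ ∈ Finset.Icc 1 (2 * n) := hs₁ hm₁
  have hM₂s : M₂ ∈ Finset.Icc 1 (2 * n) := hs₂ hM₂
  have hm₁1 : 1 ≤ m₁ := (Finset.mem_Icc.1 hm₁s).1
  have hM₂2n : M₂ ≤ 2 * n := (Finset.mem_Icc.1 hM₂s).2
  -- blocks meeting the interior of B₁'s span are contained in it
  have left_sub : ∀ C ∈ P.parts, C ≠ B₁ → ∀ x ∈ C, x ∈ Finset.Ioo m₁ (2 * k - 1) →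
      C ⊆ Finset.Ioo m₁ (2 * k - 1) := by
    intro C hC hCne x hxC hxI y hyC
    rw [Finset.mem_Ioo] at hxI ⊢
    obtain ⟨hx1, hx2⟩ := hxI
    constructor
    · by_contra h
      push_neg at h
      have hyne : y ≠ m₁ := fun e => hdisj hC hB₁p hCne hyC (e ▸ hm₁)
      have : y < m₁ := lt_of_le_of_ne h hyne
      exact hP C hC B₁ hB₁p hCne ⟨y, m₁, x, 2 * k - 1, hyC, hxC, hm₁, hmem1, this, hx1, hx2⟩
    · by_contra h
      push_neg at h
      have hyne : y ≠ 2 * k - 1 := fun e => hdisj hC hB₁p hCne hyC (e ▸ hmem1)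
      have : 2 * k - 1 < y := lt_of_le_of_ne h (Ne.symm hyne)
      exact hP B₁ hB₁p C hC (Ne.symm hCne) ⟨m₁, x, 2 * k - 1, y, hm₁, hmem1, hxC, hyC, hx1, hx2, this⟩
  have right_sub : ∀ C ∈ P.parts, C ≠ B₂ → ∀ x ∈ C, x ∈ Finset.Ioo (2 * k) M₂ →
      C ⊆ Finset.Ioo (2 * k) M₂ := by
    intro C hC hCne x hxC hxI y hyC
    rw [Finset.mem_Ioo] at hxI ⊢
    obtain ⟨hx1, hx2⟩ := hxI
    constructor
    · by_contra h
      push_neg at h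
      have hyne : y ≠ 2 * k := fun e => hdisj hC hB₂p hCne hyC (e ▸ hmem2)
      have : y < 2 * k := lt_of_le_of_ne h hyne
      exact hP C hC B₂ hB₂p hCne ⟨y, 2 * k, x, M₂, hyC, hxC, hmem2, hM₂, this, hx1, hx2⟩
    · by_contra h
      push_neg at h
      have hyne : y ≠ M₂ := fun e => hdisj hC hB₂p hCne hyC (e ▸ hM₂)
      have : M₂ < y := lt_of_le_of_ne h (Ne.symm hyne)
      exact hP B₂ hB₂p C hC (Ne.symm hCne) ⟨2 * k, x, M₂, y, hmem2, hM₂, hxC, hyC, hx1, hx2, this⟩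
  have left_even : ∀ C ∈ P.parts, C ≠ B₁ → C ⊆ Finset.Ioo m₁ (2 * k - 1) → Even C.card := by
    intro C hC hCne hsub
    rw [← Nat.not_odd_iff_even]
    intro hoddC
    refine hinner₁ C hC hCne hoddC ⟨?_, ?_⟩
    · exact fun z hz => ⟨m₁, hm₁, (Finset.mem_Ioo.1 (hsub hz)).1⟩
    · exact fun z hz => ⟨2 * k - 1, hmem1, (Finset.mem_Ioo.1 (hsub hz)).2⟩
  have right_even : ∀ C ∈ P.parts, C ≠ B₂ → C ⊆ Finset.Ioo (2 * k) M₂ → Even C.card := by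
    intro C hC hCne hsub
    rw [← Nat.not_odd_iff_even]
    intro hoddC
    refine hinner₂ C hC hCne hoddC ⟨?_, ?_⟩
    · exact fun z hz => ⟨2 * k, hmem2, (Finset.mem_Ioo.1 (hsub hz)).1⟩
    · exact fun z hz => ⟨M₂, hM₂, (Finset.mem_Ioo.1 (hsub hz)).2⟩
  -- parity of m₁ and M₂ via a covering count
  have interval_odd : ∀ (B₀ : Finset ℕ) (lo hi : ℕ), B₀ ∈ P.parts → Odd B₀.card →
      lo ∈ B₀ → hi ∈ B₀ → B₀ ⊆ Finset.Icc lo hi → 1 ≤ lo → hi ≤ 2 * n →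
      (∀ C ∈ P.parts, C ≠ B₀ → ∀ x ∈ C, x ∈ Finset.Ioo lo hi → C ⊆ Finset.Ioo lo hi) →
      (∀ C ∈ P.parts, C ≠ B₀ → C ⊆ Finset.Ioo lo hi → Even C.card) →
      Odd (Finset.Icc lo hi).card := by
    intro B₀ lo hi hB₀ hoddB₀ hlo hhi hBsub hlo1 hhi2n hsub heven
    classical
    set F := P.parts.filter (fun C => C ⊆ Finset.Ioo lo hi) with hF
    have hB₀F : B₀ ∉ F := by
      intro hmem
      have := (Finset.mem_filter.1 hmem).2 hlo
      exact absurd (Finset.mem_Ioo.1 this).1 (lt_irrefl lo)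
    have hcover : Finset.Icc lo hi = B₀ ∪ F.biUnion id := by
      ext t
      constructor
      · intro ht
        have hts : t ∈ Finset.Icc 1 (2 * n) := by
          rw [Finset.mem_Icc] at ht ⊢
          omega
        obtain ⟨C, hC, htC⟩ := P.exists_mem hts
        by_cases hCB : C = B₀
        · exact Finset.mem_union_left _ (hCB ▸ htC)
        · have htI : t ∈ Finset.Ioo lo hi := by
            rw [Finset.mem_Icc] at ht
            rw [Finset.mem_Ioo]
            have h1 : t ≠ lo := fun e => hdisj hC hB₀ hCB htC (e ▸ hlo)
            have h2 : t ≠ hi := fun e => hdisj hC hB₀ hCB htC (e ▸ hhi)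
            omega
          have hCsub := hsub C hC hCB t htC htI
          refine Finset.mem_union_right _ (Finset.mem_biUnion.2 ⟨C, ?_, htC⟩)
          exact Finset.mem_filter.2 ⟨hC, hCsub⟩
      · intro ht
        rcases Finset.mem_union.1 ht with h | h
        · exact hBsub h
        · obtain ⟨C, hC, htC⟩ := Finset.mem_biUnion.1 h
          have := (Finset.mem_filter.1 hC).2 htC
          rw [Finset.mem_Ioo] at this
          rw [Finset.mem_Icc]
          omega
    have hdiss : Disjoint B₀ (F.biUnion id) := by
      rw [Finset.disjoint_biUnion_right]
      intro C hC
      have hCp := (Finset.mem_filter.1 hC).1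
      have hCne : C ≠ B₀ := fun e => hB₀F (e ▸ hC)
      rw [Finset.disjoint_left]
      intro a ha ha'
      exact hdisj hB₀ hCp (Ne.symm hCne) ha ha'
    have hpair : ∀ C ∈ F, ∀ C' ∈ F, C ≠ C' → Disjoint (id C) (id C') := by
      intro C hC C' hC' hCC'
      have hCp := (Finset.mem_filter.1 hC).1
      have hC'p := (Finset.mem_filter.1 hC').1
      rw [Finset.disjoint_left]
      intro a ha ha'
      exact hdisj hCp hC'p hCC' ha ha'
    rw [hcover, Finset.card_union_of_disjoint hdiss, Finset.card_biUnion hpair]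
    have heven' : Even (∑ C ∈ F, (id C).card) := by
      refine Finset.even_sum _ ?_
      intro C hC
      exact heven C (Finset.mem_filter.1 hC).1 (fun e => hB₀F (e ▸ hC)) (Finset.mem_filter.1 hC).2
    exact hoddB₀.add_even heven'
  have hB₁sub : B₁ ⊆ Finset.Icc m₁ (2 * k - 1) := by
    intro x hx
    exact Finset.mem_Icc.2 ⟨hm₁le x hx, hB₁le x hx⟩
  have hB₂sub : B₂ ⊆ Finset.Icc (2 * k) M₂ := by
    intro x hx
    exact Finset.mem_Icc.2 ⟨hB₂ge x hx, hM₂ge x hx⟩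
  have hoddL := interval_odd B₁ m₁ (2 * k - 1) hB₁p hodd₁ hm₁ hmem1 hB₁sub hm₁1 (by omega)
    left_sub left_even
  have hoddR := interval_odd B₂ (2 * k) M₂ hB₂p hodd₂ hmem2 hM₂ hB₂sub (by omega) hM₂2n
    right_sub right_even
  rw [Nat.card_Icc, Nat.odd_iff] at hoddL hoddR
  have hm₁odd : m₁ % 2 = 1 := by omega
  have hM₂even : M₂ % 2 = 0 := by omega
  -- the interval U = [m₁, M₂] is closed under blocks and braces
  set U := Finset.Icc m₁ M₂ with hU
  have hUblock : ∀ C ∈ P.parts, ∀ x ∈ C, ∀ y ∈ C, x ∈ U → y ∈ U := by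
    intro C hC x hxC y hyC hxU
    by_cases hCB₁ : C = B₁
    · subst hCB₁
      rw [Finset.mem_Icc]
      exact ⟨hm₁le y hyC, by have := hB₁le y hyC; omega⟩
    by_cases hCB₂ : C = B₂
    · subst hCB₂
      rw [Finset.mem_Icc]
      exact ⟨by have := hB₂ge y hyC; omega, hM₂ge y hyC⟩
    rw [Finset.mem_Icc] at hxU
    rcases le_or_gt x (2 * k - 1) with hcase | hcase
    · have hxI : x ∈ Finset.Ioo m₁ (2 * k - 1) := by
        have h1 : x ≠ m₁ := fun e => hdisj hC hB₁p hCB₁ hxC (e ▸ hm₁)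
        have h2 : x ≠ 2 * k - 1 := fun e => hdisj hC hB₁p hCB₁ hxC (e ▸ hmem1)
        rw [Finset.mem_Ioo]
        omega
      have := left_sub C hC hCB₁ x hxC hxI hyC
      rw [Finset.mem_Ioo] at this
      rw [Finset.mem_Icc]
      omega
    · have hxI : x ∈ Finset.Ioo (2 * k) M₂ := by
        have h1 : x ≠ 2 * k := fun e => hdisj hC hB₂p hCB₂ hxC (e ▸ hmem2)
        have h2 : x ≠ M₂ := fun e => hdisj hC hB₂p hCB₂ hxC (e ▸ hM₂)
        rw [Finset.mem_Ioo]
        omega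
      have := right_sub C hC hCB₂ x hxC hxI hyC
      rw [Finset.mem_Ioo] at this
      rw [Finset.mem_Icc]
      omega
  have hpres : ∀ a b, Relation.EqvGen
      (fun x y => (∃ B ∈ P.parts, x ∈ B ∧ y ∈ B) ∨
        (∃ k : ℕ, 1 ≤ k ∧ k ≤ n ∧
          ((x = 2 * k - 1 ∧ y = 2 * k) ∨ (x = 2 * k ∧ y = 2 * k - 1)))) a b →
      (a ∈ U ↔ b ∈ U) := by
    intro a b h
    induction h with
    | rel a b hab =>
        rcases hab with ⟨C, hC, haC, hbC⟩ | ⟨j, hj1, hjn, hj⟩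
        · exact ⟨fun h => hUblock C hC a haC b hbC h, fun h => hUblock C hC b hbC a haC h⟩
        · rw [Finset.mem_Icc, Finset.mem_Icc]
          rcases hj with ⟨ha, hb⟩ | ⟨ha, hb⟩ <;> subst ha <;> subst hb <;>
            constructor <;> intro <;> omega
    | refl a => exact Iff.rfl
    | symm a b _ ih => exact ih.symm
    | trans a b c _ _ ih1 ih2 => exact ih1.trans ih2
  -- conclude
  obtain ⟨t, htB⟩ := P.nonempty_of_mem_parts hB
  have hts : t ∈ Finset.Icc 1 (2 * n) := P.le hB htB
  have htU : t ∈ U := by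
    have h := hjoin t hts m₁ hm₁s
    exact (hpres t m₁ h).2 (Finset.mem_Icc.2 ⟨le_refl m₁, by omega⟩)
  rw [Finset.mem_Icc] at htU
  rcases le_or_gt t (2 * k - 1) with hcase | hcase
  · have htI : t ∈ Finset.Ioo m₁ (2 * k - 1) := by
      have h1 : t ≠ m₁ := fun e => hdisj hB hB₁p hB₁ htB (e ▸ hm₁)
      have h2 : t ≠ 2 * k - 1 := fun e => hdisj hB hB₁p hB₁ htB (e ▸ hmem1)
      rw [Finset.mem_Ioo]
      omega
    exact left_even B hB hB₁ (left_sub B hB hB₁ t htB htI)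
  · have htI : t ∈ Finset.Ioo (2 * k) M₂ := by
      have h1 : t ≠ 2 * k := fun e => hdisj hB hB₂p hB₂ htB (e ▸ hmem2)
      have h2 : t ≠ M₂ := fun e => hdisj hB hB₂p hB₂ htB (e ▸ hM₂)
      rw [Finset.mem_Ioo]
      omega
    exact right_even B hB hB₂ (right_sub B hB hB₂ t htB htI)

/-- If a noncrossing partition of `{1,…,2n}` with `π ∨ 1̂₂ⁿ = 1̂₂ₙ` has two inner odd
blocks which are connected by a standard brace `(2k-1, 2k)`, then every other block of
`π` is even. -/
theorem even_blocks_of_two_connected_innerOdd (n : ℕ)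
    (P : Finpartition (Finset.Icc 1 (2 * n))) (hP : IsNoncrossing P)
    (hjoin : JoinWithBracesIsTop n P)
    (B₁ B₂ : Finset ℕ) (h₁ : InnerOdd P B₁) (h₂ : InnerOdd P B₂) (hne : B₁ ≠ B₂)
    (hconn : ∃ k : ℕ, 1 ≤ k ∧ k ≤ n ∧
      ((2 * k - 1 ∈ B₁ ∧ 2 * k ∈ B₂) ∨ (2 * k - 1 ∈ B₂ ∧ 2 * k ∈ B₁)))
    (B : Finset ℕ) (hB : B ∈ P.parts) (hB₁ : B ≠ B₁) (hB₂ : B ≠ B₂) :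
    Even B.card := by
  obtain ⟨k, hk1, hkn, hc | hc⟩ := hconn
  · exact aux_even_blocks n P hP hjoin B₁ B₂ ⟨h₁.1, h₁.2.1, h₁.2.2⟩ h₂ hne k hk1 hkn hc.1 hc.2 B hB hB₁ hB₂
  · exact aux_even_blocks n P hP hjoin B₂ B₁ h₂ h₁ hne.symm k hk1 hkn hc.1 hc.2 B hB hB₂ hB₁
end

section
/- For a noncrossing partition π of {1,...,n}, the Kreweras complement K(π) satisfies |K(π)| = n + 1 - |π|, where |·| denotes the number of blocks. -/
open Finset

/-- A family of finite sets of naturals is noncrossing if no two distinct members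
interlace. -/
def NCFamily (F : Finset (Finset ℕ)) : Prop :=
  ∀ B ∈ F, ∀ B' ∈ F, B ≠ B' →
    ¬ ∃ i j k l : ℕ, i ∈ B ∧ k ∈ B ∧ j ∈ B' ∧ l ∈ B' ∧ i < j ∧ j < k ∧ k < l

/-- `B` separates `x < y` if it has an element strictly between them and an element
outside `[x,y]`. -/
def KSep (F : Finset (Finset ℕ)) (x y : ℕ) : Prop :=
  ∃ B ∈ F, (∃ b ∈ B, x < b ∧ b < y) ∧ ∃ c ∈ B, c < x ∨ y < c

instance (F : Finset (Finset ℕ)) (x y : ℕ) : Decidable (KSep F x y) := by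
  unfold KSep; exact inferInstance

/-- The even positions. -/
def Eset (n : ℕ) : Finset ℕ := (Finset.Icc 1 n).image (fun i => 2 * i)

/-- The odd positions. -/
def Oset (n : ℕ) : Finset ℕ := (Finset.Icc 1 n).image (fun i => 2 * i - 1)

/-- The Kreweras complement: if `P` is a noncrossing partition of the odd positions
`{1,3,…,2n-1}` (representing `{1,…,n}`) and `Q` is the maximal partition of the even
positions `{2,4,…,2n}` (representing `{1̄,…,n̄}`) such that `P ∪ Q` is noncrossing on
the interleaved set, then `|Q| = n + 1 - |P|`. -/
theorem kreweras_complement_card (n : ℕ) (hn : 1 ≤ n)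
    (P : Finpartition ((Finset.Icc 1 n).image (fun i => 2 * i - 1)))
    (Q : Finpartition ((Finset.Icc 1 n).image (fun i => 2 * i)))
    (hP : NCFamily P.parts)
    (hPQ : NCFamily (P.parts ∪ Q.parts))
    (hmax : ∀ Q' : Finpartition ((Finset.Icc 1 n).image (fun i => 2 * i)),
      NCFamily (P.parts ∪ Q'.parts) → Q' ≤ Q) :
    Q.parts.card = n + 1 - P.parts.card := by
  have hEmem : ∀ x : ℕ, x ∈ (Eset n) ↔ (x % 2 = 0 ∧ 2 ≤ x ∧ x ≤ 2 * n) := by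
    intro x
    unfold Eset
    rw [mem_image]
    constructor
    · rintro ⟨i, hi, rfl⟩
      rw [mem_Icc] at hi
      omega
    · rintro ⟨h1, h2, h3⟩
      exact ⟨x / 2, mem_Icc.2 ⟨by omega, by omega⟩, by omega⟩
  have hOmem : ∀ x : ℕ, x ∈ (Oset n) ↔ (x % 2 = 1 ∧ x ≤ 2 * n) := by
    intro x
    unfold Oset
    rw [mem_image]
    constructor
    · rintro ⟨i, hi, rfl⟩
      rw [mem_Icc] at hi
      omega
    · rintro ⟨h1, h2⟩
      exact ⟨(x + 1) / 2, mem_Icc.2 ⟨by omega, by omega⟩, by omega⟩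
  have hOsub : ∀ B ∈ P.parts, ∀ b ∈ B, b % 2 = 1 ∧ b ≤ 2 * n :=
    fun B hB b hb => (hOmem b).1 (P.le hB hb)
  have hEsub : ∀ t ∈ Q.parts, ∀ x ∈ t, x % 2 = 0 ∧ 2 ≤ x ∧ x ≤ 2 * n :=
    fun t ht x hx => (hEmem x).1 (Q.le ht hx)
  -- Lemma A: two elements of the same part of Q are not separated by any part of P
  have hA : ∀ t ∈ Q.parts, ∀ x ∈ t, ∀ y ∈ t, x < y → ¬ KSep P.parts x y := by
    rintro t ht x hx y hy hxy ⟨B, hB, ⟨b, hbB, hxb, hby⟩, c, hcB, hc⟩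
    have hbodd := (hOsub B hB b hbB).1
    have hne : B ≠ t := by
      rintro rfl
      have := (hEsub B ht b hbB).1
      omega
    rcases hc with h | h
    · exact hPQ B (mem_union_left _ hB) t (mem_union_right _ ht) hne
        ⟨c, x, b, y, hcB, hbB, hx, hy, h, hxb, hby⟩
    · exact hPQ t (mem_union_right _ ht) B (mem_union_left _ hB) (Ne.symm hne)
        ⟨x, b, y, c, hx, hy, hbB, hcB, hxb, hby, h⟩
  -- Lemma B: two unseparated even elements lie in a common part of Q (by maximality)
  have hB2 : ∀ x ∈ (Eset n), ∀ y ∈ (Eset n), x < y → ¬ KSep P.parts x y →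
      ∃ u ∈ Q.parts, x ∈ u ∧ y ∈ u := by
    intro x hx y hy hxy hsep
    set C : Finset ℕ := {x, y} with hC
    have hCx : x ∈ C := by simp [hC]
    have hCy : y ∈ C := by simp [hC]
    set ps : Finset (Finset ℕ) := insert C (((Eset n) \ C).image fun a => ({a} : Finset ℕ))
      with hps
    have hCps : C ∈ ps := mem_insert_self _ _
    have hmem : ∀ t ∈ ps, t = C ∨ ∃ a, a ∈ (Eset n) ∧ a ∉ C ∧ t = {a} := by
      intro t htp
      rcases mem_insert.1 htp with h | h
      · exact Or.inl h
      · rcases mem_image.1 h with ⟨a, ha, rfl⟩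
        rcases mem_sdiff.1 ha with ⟨h1, h2⟩
        exact Or.inr ⟨a, h1, h2, rfl⟩
    have hsub : ∀ t ∈ ps, t ⊆ (Eset n) := by
      intro t htp z hz
      rcases hmem t htp with rfl | ⟨a, ha, _, rfl⟩
      · rcases mem_insert.1 hz with rfl | hz'
        · exact hx
        · rw [mem_singleton.1 hz']; exact hy
      · rw [mem_singleton.1 hz]; exact ha
    have hsupIndep : ps.SupIndep id := by
      rw [Finset.supIndep_iff_pairwiseDisjoint]
      intro s hs t ht hst
      rw [Finset.mem_coe] at hs ht
      simp only [Function.onFun, id]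
      rw [Finset.disjoint_left]
      intro z hzs hzt
      rcases hmem s hs with rfl | ⟨a, _, haC, rfl⟩
      · rcases hmem t ht with rfl | ⟨a', _, haC', rfl⟩
        · exact hst rfl
        · exact haC' (mem_singleton.1 hzt ▸ hzs)
      · rcases hmem t ht with rfl | ⟨a', _, haC', rfl⟩
        · exact haC (mem_singleton.1 hzs ▸ hzt)
        · apply hst
          rw [mem_singleton.1 hzs] at hzt
          rw [mem_singleton.1 hzt]
    have hsupParts : ps.sup id = (Eset n) := by
      apply Finset.Subset.antisymm
      · intro z hz
        rw [Finset.mem_sup] at hz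
        obtain ⟨t, htp, hzt⟩ := hz
        exact hsub t htp hzt
      · intro z hz
        rw [Finset.mem_sup]
        by_cases hzC : z ∈ C
        · exact ⟨C, hCps, hzC⟩
        · exact ⟨{z}, mem_insert_of_mem (mem_image_of_mem _ (mem_sdiff.2 ⟨hz, hzC⟩)),
            mem_singleton_self z⟩
    have hnb : (⊥ : Finset ℕ) ∉ ps := by
      intro h
      rcases hmem _ h with h' | ⟨a, _, _, h'⟩
      · rw [← h'] at hCx; exact notMem_empty x hCx
      · have ha : a ∈ ({a} : Finset ℕ) := mem_singleton_self a
        rw [← h'] at ha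
        exact notMem_empty a ha
    set Q' : Finpartition (Eset n) := ⟨ps, hsupIndep, hsupParts, hnb⟩ with hQ'
    have hNC : NCFamily (P.parts ∪ Q'.parts) := by
      rintro B hB B' hB' hne ⟨i, j, k, l, hiB, hkB, hjB', hlB', hij, hjk, hkl⟩
      have hQ'parts : Q'.parts = ps := rfl
      rw [hQ'parts] at hB hB'
      rcases mem_union.1 hB with hBP | hBp
      · rcases mem_union.1 hB' with hB'P | hB'p
        · exact hP B hBP B' hB'P hne ⟨i, j, k, l, hiB, hkB, hjB', hlB', hij, hjk, hkl⟩
        · rcases hmem B' hB'p with rfl | ⟨a, _, _, rfl⟩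
          · simp only [hC, mem_insert, mem_singleton] at hjB' hlB'
            exact hsep ⟨B, hBP, ⟨k, hkB, by omega, by omega⟩, i, hiB, Or.inl (by omega)⟩
          · simp only [mem_singleton] at hjB' hlB'
            omega
      · rcases hmem B hBp with rfl | ⟨a, _, _, rfl⟩
        · simp only [hC, mem_insert, mem_singleton] at hiB hkB
          rcases mem_union.1 hB' with hB'P | hB'p
          · exact hsep ⟨B', hB'P, ⟨j, hjB', by omega, by omega⟩, l, hlB', Or.inr (by omega)⟩
          · rcases hmem B' hB'p with rfl | ⟨a, _, _, rfl⟩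
            · exact hne rfl
            · simp only [mem_singleton] at hjB' hlB'
              omega
        · simp only [mem_singleton] at hiB hkB
          omega
    obtain ⟨u, hu, hCu⟩ := hmax Q' hNC hCps
    exact ⟨u, hu, hCu hCx, hCu hCy⟩
  -- counting
  have hEcard : (Eset n).card = n := by
    unfold Eset
    rw [card_image_of_injective _
      (fun a b h => by simp only at h; omega : Function.Injective fun i => 2 * i),
      Nat.card_Icc]
    omega
  have hOcard : (Oset n).card = n := by
    unfold Oset
    rw [card_image_of_injective _
      (fun a b h => by simp only at h; omega : Function.Injective fun i => 2 * i - 1),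
      Nat.card_Icc]
    omega
  -- |Q| = number of "minimal" even points
  have hQcard : Q.parts.card =
      ((Eset n).filter fun x => ∀ y ∈ (Eset n), y < x → KSep P.parts y x).card := by
    apply Finset.card_bij (fun t ht => t.min' (Q.nonempty_of_mem_parts ht))
    · intro t ht
      have hmin := t.min'_mem (Q.nonempty_of_mem_parts ht)
      rw [mem_filter]
      refine ⟨Q.le ht hmin, ?_⟩
      intro y hyE hlt
      by_contra hnsep
      obtain ⟨u, hu, hyu, hmu⟩ := hB2 y hyE _ (Q.le ht hmin) hlt hnsep
      have hut : u = t := Q.eq_of_mem_parts hu ht hmu hmin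
      rw [hut] at hyu
      have := t.min'_le y hyu
      omega
    · intro t1 h1 t2 h2 heq
      refine Q.eq_of_mem_parts h1 h2 (t1.min'_mem (Q.nonempty_of_mem_parts h1)) ?_
      rw [heq]
      exact t2.min'_mem (Q.nonempty_of_mem_parts h2)
    · intro x hxf
      rw [mem_filter] at hxf
      obtain ⟨hxE, hminP⟩ := hxf
      obtain ⟨t, ht, hxt⟩ := Q.exists_mem hxE
      refine ⟨t, ht, ?_⟩
      have h1 : t.min' (Q.nonempty_of_mem_parts ht) ≤ x := min'_le _ _ hxt
      by_contra hne
      have hlt : t.min' (Q.nonempty_of_mem_parts ht) < x := lt_of_le_of_ne h1 hne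
      exact hA t ht _ (t.min'_mem _) x hxt hlt
        (hminP _ (Q.le ht (t.min'_mem _)) hlt)
  -- nonminimal even points correspond to parts of P not containing 1
  have hNM : (P.parts.filter fun B => 1 ∉ B).card =
      ((Eset n).filter fun x => ¬ ∀ y ∈ (Eset n), y < x → KSep P.parts y x).card := by
    apply Finset.card_bij
      (fun B hB => B.max' (P.nonempty_of_mem_parts (mem_filter.1 hB).1) + 1)
    · intro B hBf
      obtain ⟨hB, h1B⟩ := mem_filter.1 hBf
      have hBne := P.nonempty_of_mem_parts hB
      have hMB : B.max' hBne ∈ B := B.max'_mem hBne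
      have hmB : B.min' hBne ∈ B := B.min'_mem hBne
      set M := B.max' hBne with hM
      set m := B.min' hBne with hm
      have hMo := hOsub B hB M hMB
      have hmo := hOsub B hB m hmB
      have hm1 : m ≠ 1 := fun h => h1B (h ▸ hmB)
      have hm3 : 3 ≤ m := by omega
      have hmM : m ≤ M := min'_le _ _ hMB
      rw [mem_filter]
      refine ⟨(hEmem (M + 1)).2 ⟨by omega, by omega, by omega⟩, ?_⟩
      intro hall
      obtain ⟨B', hB', ⟨b, hbB', hb1, hb2⟩, c, hcB', hc⟩ :=
        hall (m - 1) ((hEmem (m - 1)).2 ⟨by omega, by omega, by omega⟩) (by omega)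
      by_cases hBB : B' = B
      · subst hBB
        have hcm : m ≤ c := min'_le _ _ hcB'
        have hcM : c ≤ M := le_max' _ _ hcB'
        omega
      · have hbm : b ≠ m := by
          intro h
          exact hBB (P.eq_of_mem_parts hB' hB (h ▸ hbB') hmB)
        have hbM : b ≠ M := by
          intro h
          exact hBB (P.eq_of_mem_parts hB' hB (h ▸ hbB') hMB)
        rcases hc with h | h
        · exact hP B' hB' B hB hBB
            ⟨c, m, b, M, hcB', hbB', hmB, hMB, by omega, by omega, by omega⟩
        · exact hP B hB B' hB' (Ne.symm hBB)
            ⟨m, b, M, c, hmB, hMB, hbB', hcB', by omega, by omega, by omega⟩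
    · intro B1 h1 B2 h2 heq
      have heq' : B1.max' (P.nonempty_of_mem_parts (mem_filter.1 h1).1) =
          B2.max' (P.nonempty_of_mem_parts (mem_filter.1 h2).1) := by omega
      refine P.eq_of_mem_parts (mem_filter.1 h1).1 (mem_filter.1 h2).1
        (B1.max'_mem (P.nonempty_of_mem_parts (mem_filter.1 h1).1)) ?_
      rw [heq']
      exact B2.max'_mem (P.nonempty_of_mem_parts (mem_filter.1 h2).1)
    · intro x hxf
      rw [mem_filter] at hxf
      obtain ⟨hxE, hnall⟩ := hxf
      push_neg at hnall
      obtain ⟨y, hyE, hyx, hnsep⟩ := hnall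
      have hxE' := (hEmem x).1 hxE
      have hyE' := (hEmem y).1 hyE
      have hx1O : x - 1 ∈ (Oset n) := (hOmem (x - 1)).2 ⟨by omega, by omega⟩
      obtain ⟨B, hB, hx1B⟩ := P.exists_mem hx1O
      have hbound : ∀ c ∈ B, y < c ∧ c < x := by
        intro c hcB
        by_contra hcon
        have hcO := hOsub B hB c hcB
        exact hnsep ⟨B, hB, ⟨x - 1, hx1B, by omega, by omega⟩, c, hcB, by omega⟩
      have h1B : 1 ∉ B := by
        intro h
        have := hbound 1 h
        omega
      have hBne := P.nonempty_of_mem_parts hB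
      refine ⟨B, mem_filter.2 ⟨hB, h1B⟩, ?_⟩
      have hle : B.max' hBne ≤ x - 1 :=
        max'_le _ _ _ (fun c hc => by have := hbound c hc; omega)
      have hge : x - 1 ≤ B.max' hBne := le_max' _ _ hx1B
      omega
  -- exactly one part of P contains 1
  have h1O : (1 : ℕ) ∈ (Oset n) := (hOmem 1).2 ⟨by omega, by omega⟩
  obtain ⟨B1, hB1, h1B1⟩ := P.exists_mem h1O
  have hone : (P.parts.filter fun B => 1 ∈ B) = {B1} := by
    apply Finset.eq_singleton_iff_unique_mem.2
    refine ⟨mem_filter.2 ⟨hB1, h1B1⟩, fun B hBf => ?_⟩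
    exact P.eq_of_mem_parts (mem_filter.1 hBf).1 hB1 (mem_filter.1 hBf).2 h1B1
  have hPsplit : 1 + (P.parts.filter fun B => 1 ∉ B).card = P.parts.card := by
    have h := Finset.card_filter_add_card_filter_not
      (s := P.parts) (p := fun B => 1 ∈ B)
    rw [hone, card_singleton] at h
    convert h using 3
  have hEsplit : ((Eset n).filter fun x => ∀ y ∈ (Eset n), y < x → KSep P.parts y x).card +
      ((Eset n).filter fun x => ¬ ∀ y ∈ (Eset n), y < x → KSep P.parts y x).card = (Eset n).card := by
    exact Finset.card_filter_add_card_filter_not _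
  have hPle : P.parts.card ≤ n := by
    have h2 : P.parts.card ≤ (Oset n).card := P.card_parts_le_card
    rwa [hOcard] at h2
  rw [hQcard]
  omega
end

section
/- For each n ≥ 1, the function F_n(z) = Σ_{k=0}^{n-1} Σ_{m=0}^{∞} cot^m(π/(2n) + kπ/n) z^m satisfies, for real z in a neighborhood of 0, the closed form F_n(z) = n(1 + z·tan(n·arctan z))/(1 + z²). -/
open Real Finset Polynomial

namespace CotGF

noncomputable def w (n k : ℕ) : ℂ := Complex.exp (((2 * k + 1) * π / n : ℝ) * Complex.I)

lemma w_eq (n k : ℕ) :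
    w n k = Complex.exp (2 * π * Complex.I / n) ^ k * Complex.exp (π * Complex.I / n) := by
  rw [w, ← Complex.exp_nat_mul, ← Complex.exp_add]
  congr 1
  push_cast
  have hn : (n : ℂ) = 0 ∨ (n : ℂ) ≠ 0 := em _
  rcases hn with h | h
  · rw [h]; simp [div_zero]
  · field_simp

lemma poly_eq (n : ℕ) (hn : n ≠ 0) :
    (X : ℂ[X]) ^ n + 1 = ∏ k ∈ range n, (X - C (w n k)) := by
  have hζ := Complex.isPrimitiveRoot_exp n hn
  have hα : Complex.exp (π * Complex.I / n) ^ n = -1 := by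
    rw [← Complex.exp_nat_mul]
    have : (n : ℂ) * (↑π * Complex.I / ↑n) = π * Complex.I := by
      rw [mul_div_assoc', mul_comm, mul_div_assoc, div_self (Nat.cast_ne_zero.2 hn), mul_one]
    rw [this, Complex.exp_pi_mul_I]
  have hroots : nthRoots n (-1 : ℂ) =
      (Multiset.range n).map (fun k => Complex.exp (2 * π * Complex.I / n) ^ k *
        Complex.exp (π * Complex.I / n)) := hζ.nthRoots_eq hα
  have hmonic : ((X : ℂ[X]) ^ n - C (-1)).Monic := monic_X_pow_sub_C _ hn
  have hcard : Multiset.card ((X : ℂ[X]) ^ n - C (-1)).roots =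
      ((X : ℂ[X]) ^ n - C (-1)).natDegree := by
    rw [← nthRoots, hroots, Multiset.card_map, Multiset.card_range,
      natDegree_X_pow_sub_C]
  have := prod_multiset_X_sub_C_of_monic_of_roots_card_eq hmonic hcard
  rw [← nthRoots, hroots] at this
  rw [Multiset.map_map] at this
  have h2 : (X : ℂ[X]) ^ n + 1 = (X : ℂ[X]) ^ n - C (-1) := by
    rw [map_neg, map_one, sub_neg_eq_add]
  rw [h2, ← this, Finset.prod_eq_multiset_prod, Finset.range_val]
  congr 1
  apply Multiset.map_congr rfl
  intro k _
  simp [w_eq]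

end CotGF

namespace CotGF

lemma prod_eval (n : ℕ) (hn : n ≠ 0) (a : ℂ) :
    ∏ k ∈ range n, (a - w n k) = a ^ n + 1 := by
  have h := congrArg (Polynomial.eval a) (poly_eq n hn)
  simpa [eval_prod] using h.symm

lemma sum_prod_erase (n : ℕ) (hn : n ≠ 0) (a : ℂ) :
    ∑ k ∈ range n, ∏ j ∈ (range n).erase k, (a - w n j) = n * a ^ (n - 1) := by
  have h := congrArg derivative (poly_eq n hn)
  rw [derivative_add, derivative_one, derivative_X_pow, add_zero,
    Finset.prod_eq_multiset_prod, derivative_prod] at h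
  simp only [derivative_sub, derivative_X, derivative_C, sub_zero, mul_one] at h
  have h2 := congrArg (Polynomial.evalRingHom a) h
  rw [map_multiset_sum, Multiset.map_map] at h2
  simp only [Function.comp_apply, coe_evalRingHom, eval_mul, eval_pow, eval_X, eval_C,
    eval_natCast] at h2
  simp only [← coe_evalRingHom, map_multiset_prod, Multiset.map_map] at h2
  simp only [coe_evalRingHom, Function.comp_apply, eval_sub, eval_X, eval_C] at h2
  rw [Finset.sum_eq_multiset_sum]
  simp only [Finset.prod_eq_multiset_prod, Finset.erase_val]
  exact h2.symm

lemma sum_inv (n : ℕ) (hn : n ≠ 0) (a : ℂ) (ha : a ^ n + 1 ≠ 0) :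
    ∑ k ∈ range n, (a - w n k)⁻¹ = n * a ^ (n - 1) / (a ^ n + 1) := by
  have hne : ∀ k ∈ range n, a - w n k ≠ 0 := by
    intro k hk h0
    exact ha (by rw [← prod_eval n hn a]; exact Finset.prod_eq_zero hk h0)
  have key : ∀ k ∈ range n, (a - w n k)⁻¹ =
      (∏ j ∈ (range n).erase k, (a - w n j)) / (a ^ n + 1) := by
    intro k hk
    have hprod : (a - w n k) * ∏ j ∈ (range n).erase k, (a - w n j) = a ^ n + 1 := by
      rw [← prod_eval n hn a, ← Finset.mul_prod_erase (range n) _ hk]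
    rw [eq_div_iff ha, ← hprod, inv_mul_cancel_left₀ (hne k hk)]
  rw [Finset.sum_congr rfl key, ← Finset.sum_div, sum_prod_erase n hn a]

end CotGF

namespace CotGF

noncomputable def θ (n k : ℕ) : ℝ := π / (2 * n) + k * π / n

lemma w_exp (n k : ℕ) (hn : n ≠ 0) : w n k = Complex.exp ((2 * θ n k : ℝ) * Complex.I) := by
  have h : (2 * θ n k : ℝ) = (2 * k + 1) * π / n := by
    have hn' : (n : ℝ) ≠ 0 := Nat.cast_ne_zero.2 hn
    unfold θ; field_simp; ring
  rw [w, h]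

lemma theta_pos (n k : ℕ) (hn : n ≠ 0) : 0 < θ n k := by
  have hn' : (0:ℝ) < n := Nat.cast_pos.2 (Nat.pos_of_ne_zero hn)
  have := Real.pi_pos
  have h1 : 0 < π / (2 * n) := by positivity
  have h2 : 0 ≤ (k:ℝ) * π / n := by positivity
  unfold θ; linarith

lemma theta_lt_pi (n k : ℕ) (hn : n ≠ 0) (hk : k < n) : θ n k < π := by
  have hn' : (0:ℝ) < n := Nat.cast_pos.2 (Nat.pos_of_ne_zero hn)
  have hπ := Real.pi_pos
  have h : θ n k = (2*k+1)*π/(2*n) := by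
    unfold θ; field_simp; ring
  rw [h, div_lt_iff₀ (by positivity)]
  have hk' : (k:ℝ) + 1 ≤ n := by exact_mod_cast Nat.succ_le_of_lt hk
  nlinarith

lemma sin_theta_pos (n k : ℕ) (hn : n ≠ 0) (hk : k < n) : 0 < Real.sin (θ n k) :=
  Real.sin_pos_of_pos_of_lt_pi (theta_pos n k hn) (theta_lt_pi n k hn hk)

lemma w_formula (n k : ℕ) (hn : n ≠ 0) :
    w n k = (Complex.cos (θ n k) + Complex.sin (θ n k) * Complex.I) ^ 2 := by
  rw [w_exp n k hn, ← Complex.exp_mul_I]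
  push_cast
  rw [show (2 * (θ n k : ℂ)) * Complex.I = (θ n k : ℂ) * Complex.I + (θ n k : ℂ) * Complex.I
    by ring, Complex.exp_add, Complex.exp_mul_I, sq]

lemma cot_mul (n k : ℕ) (hn : n ≠ 0) (hk : k < n) :
    (Real.cot (θ n k) : ℂ) * (w n k - 1) = Complex.I * (w n k + 1) := by
  have hs : Real.sin (θ n k) ≠ 0 := ne_of_gt (sin_theta_pos n k hn hk)
  have hsC : (Real.sin (θ n k) : ℂ) ≠ 0 := by exact_mod_cast hs
  have pyth : (Real.sin (θ n k):ℂ)^2 + (Real.cos (θ n k):ℂ)^2 = 1 := by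
    exact_mod_cast congrArg (fun x : ℝ => (x : ℂ)) (Real.sin_sq_add_cos_sq (θ n k))
  have key : (Real.sin (θ n k) : ℂ) * (Complex.I * (w n k + 1)) =
      (Real.cos (θ n k) : ℂ) * (w n k - 1) := by
    rw [w_formula n k hn]
    simp only [← Complex.ofReal_sin, ← Complex.ofReal_cos]
    linear_combination (-((Real.sin (θ n k):ℂ) * Complex.I + (Real.cos (θ n k):ℂ))) * pyth +
      (Real.sin (θ n k):ℂ)^2 * ((Real.cos (θ n k):ℂ) + (Real.sin (θ n k):ℂ) * Complex.I) *
        Complex.I_sq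
  rw [Real.cot_eq_cos_div_sin]
  rw [Complex.ofReal_div, div_mul_eq_mul_div, div_eq_iff hsC]
  linear_combination -key

lemma w_sub_one_ne (n k : ℕ) (hn : n ≠ 0) (hk : k < n) : w n k - 1 ≠ 0 := by
  have hs : (Real.sin (θ n k) : ℂ) ≠ 0 := by
    exact_mod_cast ne_of_gt (sin_theta_pos n k hn hk)
  have pyth : (Real.sin (θ n k):ℂ)^2 + (Real.cos (θ n k):ℂ)^2 = 1 := by
    exact_mod_cast congrArg (fun x : ℝ => (x : ℂ)) (Real.sin_sq_add_cos_sq (θ n k))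
  have h : w n k - 1 = 2 * Complex.I * (Real.sin (θ n k):ℂ) *
      ((Real.cos (θ n k):ℂ) + (Real.sin (θ n k):ℂ) * Complex.I) := by
    rw [w_formula n k hn]
    simp only [← Complex.ofReal_sin, ← Complex.ofReal_cos]
    linear_combination pyth + (-((Real.sin (θ n k):ℂ)^2)) * Complex.I_sq
  rw [h]
  have hcs : ((Real.cos (θ n k):ℂ) + (Real.sin (θ n k):ℂ) * Complex.I) ≠ 0 := by
    intro h0
    have := congrArg Complex.im h0
    simp at this
    exact ne_of_gt (sin_theta_pos n k hn hk) this
  exact mul_ne_zero (mul_ne_zero (mul_ne_zero two_ne_zero Complex.I_ne_zero) hs) hcs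

end CotGF

namespace CotGF

lemma final_alg (m : ℕ) (A B c : ℂ) (hB : B ≠ 0) (hAB : A^(m+1) + B^(m+1) ≠ 0) :
    B⁻¹ * (c - (A/B - 1) * (c * (A/B) ^ m / ((A/B) ^ (m+1) + 1))) =
      c * (A^m + B^m) / (A^(m+1) + B^(m+1)) := by
  have e2 : (A/B) ^ (m+1) + 1 = (A^(m+1) + B^(m+1))/B^(m+1) := by
    rw [div_pow]
    field_simp
  rw [e2, div_pow, eq_div_iff hAB]
  field_simp
  ring

lemma main_sum (n : ℕ) (hn : n ≠ 0) (z : ℝ)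
    (hz : ∀ k ∈ range n, (1 : ℝ) - Real.cot (θ n k) * z ≠ 0)
    (hAB : (1 + (z:ℂ) * Complex.I) ^ n + (1 - (z:ℂ) * Complex.I) ^ n ≠ 0) :
    ∑ k ∈ range n, ((1 : ℂ) - (Real.cot (θ n k) : ℂ) * z)⁻¹ =
      n * ((1 + (z:ℂ)*Complex.I)^(n-1) + (1 - (z:ℂ)*Complex.I)^(n-1)) /
        ((1 + (z:ℂ)*Complex.I)^n + (1 - (z:ℂ)*Complex.I)^n) := by
  set A : ℂ := 1 + (z:ℂ)*Complex.I with hA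
  set B : ℂ := 1 - (z:ℂ)*Complex.I with hB
  have hBne : B ≠ 0 := by
    intro h0
    have := congrArg Complex.re h0
    simp [hB] at this
  set a : ℂ := A / B with ha
  have hBa : B * a = A := by rw [ha]; field_simp
  have han : a ^ n + 1 ≠ 0 := by
    have h1 : a ^ n + 1 = (A ^ n + B ^ n) / B ^ n := by
      rw [ha, div_pow]
      field_simp
    rw [h1]
    exact div_ne_zero hAB (pow_ne_zero n hBne)
  have key : ∀ k ∈ range n, ((1 : ℂ) - (Real.cot (θ n k) : ℂ) * z)⁻¹ =
      B⁻¹ * (1 - (a - 1) * (a - w n k)⁻¹) := by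
    intro k hk
    have hk' : k < n := Finset.mem_range.1 hk
    have hw1 := w_sub_one_ne n k hn hk'
    have hcot := cot_mul n k hn hk'
    have hTne : ((1 : ℂ) - (Real.cot (θ n k) : ℂ) * z) ≠ 0 := by
      intro h0
      exact hz k hk (by exact_mod_cast h0)
    have hT : ((1 : ℂ) - (Real.cot (θ n k) : ℂ) * z) * (w n k - 1) = B * (w n k - a) := by
      linear_combination (-(z:ℂ)) * hcot + hBa + hA + (-(w n k)) * hB
    have hwa : a - w n k ≠ 0 := by
      intro h0
      have h1 : w n k - a = 0 := by linear_combination -h0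
      rw [h1, mul_zero] at hT
      rcases mul_eq_zero.1 hT with h | h
      · exact hTne h
      · exact hw1 h
    have expand : B⁻¹ * (1 - (a - 1) * (a - w n k)⁻¹) = (1 - w n k) / (B * (a - w n k)) := by
      field_simp
      ring
    have hwa' : w n k - a ≠ 0 := fun h => hwa (by linear_combination -h)
    rw [expand,
      show ((1 : ℂ) - (Real.cot (θ n k) : ℂ) * z) = B * (w n k - a) / (w n k - 1) from
        by rw [eq_div_iff hw1]; exact hT,
      inv_div, div_eq_div_iff (mul_ne_zero hBne hwa') (mul_ne_zero hBne hwa)]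
    ring
  rw [Finset.sum_congr rfl key, ← Finset.mul_sum]
  rw [Finset.sum_sub_distrib, Finset.sum_const, Finset.card_range, ← Finset.mul_sum,
    sum_inv n hn a han]
  obtain ⟨m, rfl⟩ : ∃ m, n = m + 1 := ⟨n - 1, (Nat.succ_pred_eq_of_pos (Nat.pos_of_ne_zero hn)).symm⟩
  simp only [Nat.add_sub_cancel, nsmul_eq_mul, mul_one]
  rw [ha]
  exact final_alg m A B _ hBne hAB


lemma AB_pow (z : ℝ) (j : ℕ) :
    (1 + (z:ℂ)*Complex.I)^j + (1 - (z:ℂ)*Complex.I)^j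
      = ((Real.sqrt (1+z^2) ^ j * (2 * Real.cos (j * Real.arctan z)) : ℝ) : ℂ) := by
  have hs : (0:ℝ) < Real.sqrt (1 + z^2) := Real.sqrt_pos.2 (by positivity)
  set s := Real.sqrt (1+z^2) with hsdef
  set t := Real.arctan z with htdef
  have hcos : s * Real.cos t = 1 := by
    rw [htdef, Real.cos_arctan, ← hsdef]
    field_simp
  have hsin : s * Real.sin t = z := by
    rw [htdef, Real.sin_arctan, ← hsdef]
    field_simp
  have hcosC : (s:ℂ) * ((Real.cos t : ℝ):ℂ) = 1 := by
    exact_mod_cast congrArg (fun x:ℝ => (x:ℂ)) hcos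
  have hsinC : (s:ℂ) * ((Real.sin t : ℝ):ℂ) = (z:ℂ) := by
    exact_mod_cast congrArg (fun x:ℝ => (x:ℂ)) hsin
  have hP : (1 + (z:ℂ)*Complex.I) = (s:ℂ) * Complex.exp ((t:ℂ) * Complex.I) := by
    rw [Complex.exp_mul_I, ← Complex.ofReal_cos, ← Complex.ofReal_sin]
    linear_combination -hcosC - Complex.I * hsinC
  have hM : (1 - (z:ℂ)*Complex.I) = (s:ℂ) * Complex.exp (((-t : ℝ):ℂ) * Complex.I) := by
    rw [Complex.exp_mul_I, ← Complex.ofReal_cos, ← Complex.ofReal_sin, Real.cos_neg,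
      Real.sin_neg, Complex.ofReal_neg]
    linear_combination -hcosC + Complex.I * hsinC
  have e1 : Complex.exp ((t:ℂ) * Complex.I) ^ j = Complex.exp (((j*t : ℝ):ℂ) * Complex.I) := by
    rw [← Complex.exp_nat_mul]
    push_cast
    ring_nf
  have e2 : Complex.exp (((-t:ℝ):ℂ) * Complex.I) ^ j
      = Complex.exp (((-(j*t) : ℝ):ℂ) * Complex.I) := by
    rw [← Complex.exp_nat_mul]
    push_cast
    ring_nf
  rw [hP, hM, mul_pow, mul_pow, e1, e2, Complex.exp_mul_I, Complex.exp_mul_I,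
    ← Complex.ofReal_cos, ← Complex.ofReal_sin, ← Complex.ofReal_cos, ← Complex.ofReal_sin,
    Real.cos_neg, Real.sin_neg]
  push_cast
  ring

lemma real_rhs (m : ℕ) (z : ℝ) (hcos : Real.cos (((m:ℝ)+1) * Real.arctan z) ≠ 0) :
    ((m:ℝ)+1) * (Real.sqrt (1+z^2) ^ m * (2 * Real.cos ((m:ℝ) * Real.arctan z))) /
      (Real.sqrt (1+z^2) ^ (m+1) * (2 * Real.cos (((m:ℝ)+1) * Real.arctan z)))
    = ((m:ℝ)+1) * (1 + z * Real.tan (((m:ℝ)+1) * Real.arctan z)) / (1 + z ^ 2) := by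
  have hs : (0:ℝ) < Real.sqrt (1 + z^2) := Real.sqrt_pos.2 (by positivity)
  set s := Real.sqrt (1+z^2) with hsdef
  set t := Real.arctan z with htdef
  have hsne : s ≠ 0 := ne_of_gt hs
  have hs2 : s ^ 2 = 1 + z^2 := Real.sq_sqrt (by positivity)
  have hcost : s * Real.cos t = 1 := by
    rw [htdef, Real.cos_arctan, ← hsdef]
    field_simp
  have hsint : s * Real.sin t = z := by
    rw [htdef, Real.sin_arctan, ← hsdef]
    field_simp
  have key : s * Real.cos ((m:ℝ) * t)
      = Real.cos (((m:ℝ)+1) * t) + z * Real.sin (((m:ℝ)+1) * t) := by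
    rw [show (m:ℝ) * t = ((m:ℝ)+1)*t - t by ring, Real.cos_sub]
    linear_combination Real.cos (((m:ℝ)+1)*t) * hcost + Real.sin (((m:ℝ)+1)*t) * hsint
  have h1z : (1 : ℝ) + z^2 ≠ 0 := by positivity
  have h2m : s ^ m * 2 ≠ 0 := mul_ne_zero (pow_ne_zero _ hsne) two_ne_zero
  rw [pow_succ, Real.tan_eq_sin_div_cos,
    show ((m:ℝ)+1) * (s^m * (2 * Real.cos ((m:ℝ) * t)))
      = (s^m*2) * (((m:ℝ)+1) * Real.cos ((m:ℝ) * t)) by ring,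
    show s^m*s*(2*Real.cos (((m:ℝ)+1) * t)) = (s^m*2)*(s*Real.cos (((m:ℝ)+1) * t)) by ring,
    mul_div_mul_left _ _ h2m,
    div_eq_div_iff (mul_ne_zero hsne hcos) h1z]
  have hc : (1 + z * (Real.sin (((m:ℝ)+1)*t) / Real.cos (((m:ℝ)+1)*t))) * Real.cos (((m:ℝ)+1)*t)
      = Real.cos (((m:ℝ)+1)*t) + z * Real.sin (((m:ℝ)+1)*t) := by
    rw [add_mul, one_mul, mul_assoc, div_mul_cancel₀ _ hcos]
  linear_combination (((m:ℝ)+1) * s) * key - (((m:ℝ)+1) * s) * hc -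
    (((m:ℝ)+1) * Real.cos ((m:ℝ)*t)) * hs2

end CotGF


/-- The generating function of the cotangent power sums:
`F_n(z) = Σ_{k<n} Σ_m cot^m(π/(2n)+kπ/n) z^m = n(1 + z tan(n arctan z))/(1+z²)`
for real `z` near `0`. -/
theorem cotangent_power_sum_generating_function (n : ℕ) (hn : 1 ≤ n) :
    ∃ ε > (0 : ℝ), ∀ z : ℝ, |z| < ε →
      (∑ k ∈ Finset.range n, ∑' m : ℕ,
          Real.cot (π / (2 * n) + k * π / n) ^ m * z ^ m) =
        n * (1 + z * Real.tan (n * Real.arctan z)) / (1 + z ^ 2) := by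
  have hn0 : n ≠ 0 := by omega
  set C : ℝ := (∑ k ∈ Finset.range n, |Real.cot (CotGF.θ n k)|) + 1 with hC
  have hsum0 : 0 ≤ ∑ k ∈ Finset.range n, |Real.cot (CotGF.θ n k)| :=
    Finset.sum_nonneg (fun _ _ => abs_nonneg _)
  have hC1 : 1 ≤ C := by rw [hC]; linarith
  have hCpos : 0 < C := lt_of_lt_of_le one_pos hC1
  have hcont : ContinuousAt (fun z : ℝ => Real.cos (n * Real.arctan z)) 0 :=
    (Real.continuous_cos.comp (continuous_const.mul Real.continuous_arctan)).continuousAt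
  rw [Metric.continuousAt_iff] at hcont
  obtain ⟨δ, hδpos, hδ⟩ := hcont 1 one_pos
  refine ⟨min C⁻¹ δ, lt_min (by positivity) hδpos, ?_⟩
  intro z hz
  have hz1 : |z| < C⁻¹ := lt_of_lt_of_le hz (min_le_left _ _)
  have hz2 : |z| < δ := lt_of_lt_of_le hz (min_le_right _ _)
  have hcosne : Real.cos (n * Real.arctan z) ≠ 0 := by
    have h1 := hδ (show dist z 0 < δ by rwa [Real.dist_eq, sub_zero])
    rw [Real.dist_eq] at h1
    simp only [Real.arctan_zero, mul_zero, Real.cos_zero] at h1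
    intro h0
    rw [h0] at h1
    norm_num at h1
  have habs : ∀ k ∈ Finset.range n, |Real.cot (CotGF.θ n k) * z| < 1 := by
    intro k hk
    have h1 : |Real.cot (CotGF.θ n k)| ≤ C - 1 := by
      have h2 := Finset.single_le_sum (f := fun k => |Real.cot (CotGF.θ n k)|)
        (fun _ _ => abs_nonneg _) hk
      rw [hC]
      linarith
    have h3 : |Real.cot (CotGF.θ n k) * z| ≤ (C - 1) * C⁻¹ := by
      rw [abs_mul]
      exact mul_le_mul h1 (le_of_lt hz1) (abs_nonneg z) (by linarith)
    have h4 : (C - 1) * C⁻¹ < 1 := by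
      have h5 : (C-1)*C⁻¹ = 1 - C⁻¹ := by field_simp
      have h6 : 0 < C⁻¹ := by positivity
      rw [h5]
      linarith
    linarith
  have hzne : ∀ k ∈ Finset.range n, (1:ℝ) - Real.cot (CotGF.θ n k) * z ≠ 0 := by
    intro k hk h0
    have h1 : Real.cot (CotGF.θ n k) * z = 1 := by linarith
    have h2 := habs k hk
    rw [h1] at h2
    norm_num at h2
  have hts : ∀ k ∈ Finset.range n, (∑' m : ℕ,
      Real.cot (π / (2 * n) + k * π / n) ^ m * z ^ m)
        = (1 - Real.cot (CotGF.θ n k) * z)⁻¹ := by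
    intro k hk
    calc (∑' m : ℕ, Real.cot (π / (2 * n) + k * π / n) ^ m * z ^ m)
        = ∑' m : ℕ, (Real.cot (CotGF.θ n k) * z) ^ m :=
          tsum_congr (fun m => (mul_pow _ _ m).symm)
      _ = (1 - Real.cot (CotGF.θ n k) * z)⁻¹ := tsum_geometric_of_abs_lt_one (habs k hk)
  have hABne : (1 + (z:ℂ)*Complex.I)^n + (1 - (z:ℂ)*Complex.I)^n ≠ 0 := by
    rw [CotGF.AB_pow]
    rw [Complex.ofReal_ne_zero]
    have hsne : Real.sqrt (1+z^2) ≠ 0 := ne_of_gt (Real.sqrt_pos.2 (by positivity))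
    exact mul_ne_zero (pow_ne_zero _ hsne) (mul_ne_zero two_ne_zero hcosne)
  have hmain := CotGF.main_sum n hn0 z hzne hABne
  rw [Finset.sum_congr rfl hts, ← Complex.ofReal_inj]
  have cast1 : ((∑ k ∈ Finset.range n, (1 - Real.cot (CotGF.θ n k) * z)⁻¹ : ℝ) : ℂ)
      = ∑ k ∈ Finset.range n, ((1:ℂ) - (Real.cot (CotGF.θ n k) : ℂ) * (z:ℂ))⁻¹ := by
    simp only [Complex.ofReal_sum, Complex.ofReal_inv, Complex.ofReal_sub, Complex.ofReal_mul,
      Complex.ofReal_one]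
  rw [cast1, hmain]
  obtain ⟨m, rfl⟩ : ∃ m, n = m + 1 := ⟨n - 1, by omega⟩
  rw [Nat.add_sub_cancel, CotGF.AB_pow z m, CotGF.AB_pow z (m+1)]
  rw [show ((m+1 : ℕ) : ℂ) = ((((m+1 : ℕ)) : ℝ) : ℂ) by push_cast; ring,
    ← Complex.ofReal_mul, ← Complex.ofReal_div, Complex.ofReal_inj]
  have hcosne' : Real.cos (((m:ℝ)+1) * Real.arctan z) ≠ 0 := by push_cast at hcosne ⊢; exact hcosne
  have hr := CotGF.real_rhs m z hcosne'
  push_cast at hr ⊢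
  linarith [hr]
end
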